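/- arXiv:1912.00160 — 4 statements merged into one kernel-verified Lean document; each statement's English description precedes it below -/
import Mathlib

section
/- Define m_n := (n!)^2 K_n^2 for n ≥ 1, where K_n := ∫_0^∞ (ln(1+x))^n e^{-x} dx. Then the sequence (m_n) satisfies Carleman's condition, i.e., the series ∑_{n=1}^∞ m_n^{-1/(2n)} diverges to infinity, but it does not satisfy the quadratic rate of growth condition: there is no constant C > 0 such that m_{n+1} ≤ C (n+1)^2 m_n for all n ≥ 1. -/
open MeasureTheory Filter Topology Real

lemma aux_integrable (n : ℕ) :
    MeasureTheory.IntegrableOn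
      (fun x : ℝ => (Real.log (1 + x)) ^ n * Real.exp (-x)) (Set.Ioi 0) := by
  have h := Real.GammaIntegral_convergent (s := (n + 1 : ℝ)) (by positivity)
  have h' : MeasureTheory.IntegrableOn
      (fun x : ℝ => x ^ n * Real.exp (-x)) (Set.Ioi 0) := by
    refine h.congr_fun ?_ measurableSet_Ioi
    intro x hx
    simp only [add_sub_cancel_right, Real.rpow_natCast]
    ring
  refine h'.mono' ?_ ?_
  · exact (((Real.measurable_log.comp (measurable_const.add measurable_id)).pow_const n).mul
      (measurable_id.neg.exp)).aestronglyMeasurable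
  · filter_upwards [ae_restrict_mem measurableSet_Ioi] with x hx
    have hx0 : (0:ℝ) < x := hx
    have h1 : 0 ≤ Real.log (1 + x) := Real.log_nonneg (by linarith)
    have h2 : Real.log (1 + x) ≤ x := by
      have := Real.log_le_sub_one_of_pos (x := 1 + x) (by linarith)
      linarith
    rw [Real.norm_eq_abs, abs_of_nonneg (by positivity)]
    exact mul_le_mul_of_nonneg_right (pow_le_pow_left₀ h1 h2 n) (Real.exp_pos _).le

lemma aux_lower (n : ℕ) {t : ℝ} (ht : 0 < t) :
    t ^ n * Real.exp (-(Real.exp t)) ≤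
      ∫ x in Set.Ioi (0:ℝ), (Real.log (1 + x)) ^ n * Real.exp (-x) := by
  have h1t : (1:ℝ) < Real.exp t := by
    have := Real.add_one_le_exp t; linarith
  have hsub : Set.Ioc (Real.exp t - 1) (Real.exp t) ⊆ Set.Ioi (0:ℝ) := by
    intro x hx; exact lt_of_lt_of_le (by linarith) hx.1.le
  have hint : MeasureTheory.IntegrableOn (fun x : ℝ => (Real.log (1 + x)) ^ n * Real.exp (-x))
      (Set.Ioc (Real.exp t - 1) (Real.exp t)) := (aux_integrable n).mono_set hsub
  have hstep : t ^ n * Real.exp (-(Real.exp t)) ≤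
      ∫ x in Set.Ioc (Real.exp t - 1) (Real.exp t),
        (Real.log (1 + x)) ^ n * Real.exp (-x) := by
    have hvol : (volume (Set.Ioc (Real.exp t - 1) (Real.exp t))).toReal = 1 := by
      rw [Real.volume_Ioc]
      norm_num
    have := MeasureTheory.setIntegral_ge_of_const_le (μ := volume)
        (c := t ^ n * Real.exp (-(Real.exp t))) measurableSet_Ioc
        (by exact (measure_Ioc_lt_top).ne) ?_ hint
    · rw [measureReal_def, hvol, smul_eq_mul, one_mul] at this; exact this
    · intro x hx
      have hx1 : Real.exp t ≤ 1 + x := by linarith [hx.1]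
      have hlog : t ≤ Real.log (1 + x) := by
        rw [Real.le_log_iff_exp_le (by linarith)]; exact hx1
      have h2 : Real.exp (-(Real.exp t)) ≤ Real.exp (-x) :=
        Real.exp_le_exp.2 (by linarith [hx.2])
      exact mul_le_mul (pow_le_pow_left₀ ht.le hlog n) h2 (Real.exp_pos _).le
        (pow_nonneg (ht.le.trans hlog) n)
  refine hstep.trans ?_
  refine MeasureTheory.setIntegral_mono_set (aux_integrable n) ?_ hsub.eventuallyLE
  filter_upwards [ae_restrict_mem measurableSet_Ioi] with x hx
  have hx0 : (0:ℝ) < x := hx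
  have h1 : 0 ≤ Real.log (1 + x) := Real.log_nonneg (by linarith)
  positivity

lemma aux_pow_le (n : ℕ) (hn : 1 ≤ n) {x : ℝ} (hx : 0 < x) :
    x ^ n ≤ (2 * n : ℝ) ^ n * Real.exp (1/2 * x) := by
  have hn0 : (0:ℝ) < n := by exact_mod_cast hn
  have h2n : (0:ℝ) < 2 * n := by linarith
  have hlog : Real.log x ≤ Real.log (2 * n) + x / (2 * n) - 1 := by
    have h := Real.log_le_sub_one_of_pos (x := x / (2 * n)) (by positivity)
    rw [Real.log_div hx.ne' h2n.ne'] at h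
    linarith
  have hmul : (n:ℝ) * Real.log x ≤ (n:ℝ) * Real.log (2 * n) + 1/2 * x := by
    have h2 : (n:ℝ) * (x / (2 * n)) = 1/2 * x := by field_simp
    nlinarith [mul_le_mul_of_nonneg_left hlog hn0.le]
  calc x ^ n = Real.exp ((n:ℝ) * Real.log x) := by
        rw [Real.exp_nat_mul, Real.exp_log hx]
    _ ≤ Real.exp ((n:ℝ) * Real.log (2 * n) + 1/2 * x) := Real.exp_le_exp.2 hmul
    _ = (2 * n : ℝ) ^ n * Real.exp (1/2 * x) := by
        rw [Real.exp_add, Real.exp_nat_mul, Real.exp_log h2n]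

lemma aux_L_one (n : ℕ) (hn : 1 ≤ n) : (1:ℝ) ≤ Real.log (1 + 6 * (n:ℝ) ^ 2) := by
  have h1n : (1:ℝ) ≤ (n:ℝ) := by exact_mod_cast hn
  rw [Real.le_log_iff_exp_le (by nlinarith)]
  have h3 : Real.exp 1 < 2.7182818286 := Real.exp_one_lt_d9
  nlinarith

lemma aux_upper (n : ℕ) (hn : 1 ≤ n) :
    (∫ x in Set.Ioi (0:ℝ), (Real.log (1 + x)) ^ n * Real.exp (-x))
      ≤ 2 * (Real.log (1 + 6 * (n:ℝ) ^ 2)) ^ n := by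
  have hn0 : (0:ℝ) < n := by exact_mod_cast hn
  have h1n : (1:ℝ) ≤ (n:ℝ) := by exact_mod_cast hn
  set T : ℝ := 6 * (n:ℝ) ^ 2 with hT
  have hT0 : (0:ℝ) < T := by positivity
  set L : ℝ := Real.log (1 + T) with hLdef
  have hL1 : (1:ℝ) ≤ L := aux_L_one n hn
  have hexpint : MeasureTheory.IntegrableOn (fun x : ℝ => Real.exp (-x)) (Set.Ioi 0) := by
    simpa using exp_neg_integrableOn_Ioi 0 one_pos
  have hsub1 : Set.Ioc (0:ℝ) T ⊆ Set.Ioi 0 := Set.Ioc_subset_Ioi_self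
  have hsub2 : Set.Ioi T ⊆ Set.Ioi (0:ℝ) := Set.Ioi_subset_Ioi hT0.le
  have hsplit : (∫ x in Set.Ioi (0:ℝ), (Real.log (1 + x)) ^ n * Real.exp (-x))
      = (∫ x in Set.Ioc (0:ℝ) T, (Real.log (1 + x)) ^ n * Real.exp (-x))
        + ∫ x in Set.Ioi T, (Real.log (1 + x)) ^ n * Real.exp (-x) := by
    rw [← MeasureTheory.setIntegral_union Set.Ioc_disjoint_Ioi_same measurableSet_Ioi
      ((aux_integrable n).mono_set hsub1) ((aux_integrable n).mono_set hsub2),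
      Set.Ioc_union_Ioi_eq_Ioi hT0.le]
  have h1 : (∫ x in Set.Ioc (0:ℝ) T, (Real.log (1 + x)) ^ n * Real.exp (-x)) ≤ L ^ n := by
    have step1 : (∫ x in Set.Ioc (0:ℝ) T, (Real.log (1 + x)) ^ n * Real.exp (-x))
        ≤ ∫ x in Set.Ioc (0:ℝ) T, L ^ n * Real.exp (-x) := by
      refine MeasureTheory.setIntegral_mono_on ((aux_integrable n).mono_set hsub1)
        ((hexpint.mono_set hsub1).const_mul (L ^ n)) measurableSet_Ioc ?_
      intro x hx
      have hx0 : (0:ℝ) < x := hx.1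
      have hlogle : Real.log (1 + x) ≤ L :=
        Real.log_le_log (by linarith) (by linarith [hx.2])
      have hlognn : 0 ≤ Real.log (1 + x) := Real.log_nonneg (by linarith)
      exact mul_le_mul_of_nonneg_right (pow_le_pow_left₀ hlognn hlogle n)
        (Real.exp_pos _).le
    have step2 : (∫ x in Set.Ioc (0:ℝ) T, L ^ n * Real.exp (-x)) ≤ L ^ n * 1 := by
      rw [MeasureTheory.integral_const_mul]
      have : (∫ x in Set.Ioc (0:ℝ) T, Real.exp (-x)) ≤ ∫ x in Set.Ioi (0:ℝ), Real.exp (-x) := by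
        refine MeasureTheory.setIntegral_mono_set hexpint ?_ hsub1.eventuallyLE
        filter_upwards with x using (Real.exp_pos _).le
      rw [integral_exp_neg_Ioi_zero] at this
      have hLn : (0:ℝ) ≤ L ^ n := by positivity
      nlinarith
    linarith
  have h2 : (∫ x in Set.Ioi T, (Real.log (1 + x)) ^ n * Real.exp (-x)) ≤ L ^ n := by
    have hint2 : MeasureTheory.IntegrableOn
        (fun x : ℝ => (2 * n : ℝ) ^ n * Real.exp (-(1/2 * x))) (Set.Ioi T) := by
      have := (exp_neg_integrableOn_Ioi T (by norm_num : (0:ℝ) < 1/2)).const_mul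
        ((2 * n : ℝ) ^ n)
      simpa [neg_mul, IntegrableOn] using this
    have step1 : (∫ x in Set.Ioi T, (Real.log (1 + x)) ^ n * Real.exp (-x))
        ≤ ∫ x in Set.Ioi T, (2 * n : ℝ) ^ n * Real.exp (-(1/2 * x)) := by
      refine MeasureTheory.setIntegral_mono_on ((aux_integrable n).mono_set hsub2) hint2
        measurableSet_Ioi ?_
      intro x hx
      have hx0 : (0:ℝ) < x := hT0.trans hx
      have hlognn : 0 ≤ Real.log (1 + x) := Real.log_nonneg (by linarith)
      have hlogle : Real.log (1 + x) ≤ x := by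
        have := Real.log_le_sub_one_of_pos (x := 1 + x) (by linarith); linarith
      calc (Real.log (1 + x)) ^ n * Real.exp (-x) ≤ x ^ n * Real.exp (-x) :=
            mul_le_mul_of_nonneg_right (pow_le_pow_left₀ hlognn hlogle n)
              (Real.exp_pos _).le
        _ ≤ ((2 * n : ℝ) ^ n * Real.exp (1/2 * x)) * Real.exp (-x) :=
            mul_le_mul_of_nonneg_right (aux_pow_le n hn hx0) (Real.exp_pos _).le
        _ = (2 * n : ℝ) ^ n * Real.exp (-(1/2 * x)) := by
            rw [mul_assoc, ← Real.exp_add]; ring_nf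
    have hval : (∫ x in Set.Ioi T, Real.exp (-(1/2 * x))) = 2 * Real.exp (-(1/2 * T)) := by
      have := MeasureTheory.integral_comp_mul_left_Ioi (fun y : ℝ => Real.exp (-y)) T
        (by norm_num : (0:ℝ) < 1/2)
      rw [integral_exp_neg_Ioi] at this
      simpa [smul_eq_mul] using this
    have step2 : (∫ x in Set.Ioi T, (2 * n : ℝ) ^ n * Real.exp (-(1/2 * x))) ≤ 1 := by
      rw [MeasureTheory.integral_const_mul, hval]
      have h2n : (0:ℝ) < 2 * n := by linarith
      have hpow : (2 * n : ℝ) ^ n = Real.exp ((n:ℝ) * Real.log (2 * n)) := by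
        rw [Real.exp_nat_mul, Real.exp_log h2n]
      have hlog2n : Real.log (2 * n) ≤ 2 * n - 1 := by
        have := Real.log_le_sub_one_of_pos h2n; linarith
      have hexpo : (n:ℝ) * Real.log (2 * n) + (-(1/2 * T)) ≤ -1 := by
        have := mul_le_mul_of_nonneg_left hlog2n hn0.le
        simp only [hT]; nlinarith [h1n, this, sq_nonneg ((n:ℝ) - 1)]
      calc (2 * n : ℝ) ^ n * (2 * Real.exp (-(1/2 * T)))
          = 2 * Real.exp ((n:ℝ) * Real.log (2 * n) + (-(1/2 * T))) := by
            rw [hpow, Real.exp_add]; ring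
        _ ≤ 2 * Real.exp (-1) := by
            have := Real.exp_le_exp.2 hexpo; linarith
        _ ≤ 1 := by
            have h := Real.add_one_le_exp 1
            have h2 : Real.exp (-1) = (Real.exp 1)⁻¹ := by
              rw [Real.exp_neg]
            rw [h2]
            rw [mul_inv_le_iff₀ (Real.exp_pos 1)]
            linarith
    have hLn : (1:ℝ) ≤ L ^ n := one_le_pow₀ hL1
    linarith
  rw [hsplit]; linarith

lemma aux_f_nonneg (n : ℕ) : 0 ≤ ((n : ℝ) * Real.log (n + 1))⁻¹ :=
  inv_nonneg.2 (mul_nonneg (Nat.cast_nonneg n) (Real.log_nonneg (by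
    have := Nat.cast_nonneg (α := ℝ) n; linarith)))

lemma aux_not_summable : ¬ Summable (fun n : ℕ => ((n : ℝ) * Real.log (n + 1))⁻¹) := by
  intro hs
  set f : ℕ → ℝ := fun n => ((n : ℝ) * Real.log (n + 1))⁻¹ with hf
  have hanti : ∀ ⦃a b : ℕ⦄, 0 < a → a ≤ b → f b ≤ f a := by
    intro a b ha hab
    have ha' : (0:ℝ) < a := by exact_mod_cast ha
    have hb' : (0:ℝ) ≤ b := Nat.cast_nonneg b
    have hloga : (0:ℝ) < Real.log (a + 1) := Real.log_pos (by linarith)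
    have hab' : (a:ℝ) ≤ b := by exact_mod_cast hab
    refine inv_anti₀ (by positivity) ?_
    have : Real.log (a + 1) ≤ Real.log (b + 1) := Real.log_le_log (by linarith) (by linarith)
    exact mul_le_mul hab' this hloga.le hb'
  have hcond := (summable_condensed_iff_of_nonneg aux_f_nonneg hanti).2 hs
  have hsum2 : Summable (fun k : ℕ => (((k:ℝ) + 1) * Real.log 2)⁻¹) := by
    refine hcond.of_nonneg_of_le (fun k => by positivity) ?_
    intro k
    have h2k : (0:ℝ) < 2 ^ k := by positivity
    have hlogpos : (0:ℝ) < Real.log (2 ^ k + 1) := Real.log_pos (by linarith)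
    have hle : Real.log ((2:ℝ) ^ k + 1) ≤ ((k:ℝ) + 1) * Real.log 2 := by
      have h1 : ((2:ℝ) ^ k + 1) ≤ 2 ^ (k + 1) := by
        rw [pow_succ]
        nlinarith [one_le_pow₀ (M₀ := ℝ) (a := 2) (by norm_num : (1:ℝ) ≤ 2) (n := k)]
      calc Real.log ((2:ℝ) ^ k + 1) ≤ Real.log (2 ^ (k + 1)) :=
            Real.log_le_log (by positivity) h1
        _ = ((k:ℝ) + 1) * Real.log 2 := by
            rw [Real.log_pow]; push_cast; ring
    have heq : (2:ℝ) ^ k * f (2 ^ k) = (Real.log ((2:ℝ) ^ k + 1))⁻¹ := by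
      rw [hf]
      push_cast
      rw [mul_inv]
      rw [← mul_assoc, mul_inv_cancel₀ h2k.ne', one_mul]
    rw [heq]
    exact inv_anti₀ hlogpos hle
  have hsum3 : Summable (fun k : ℕ => ((k:ℝ) + 1)⁻¹) := by
    have hlog2 : (0:ℝ) < Real.log 2 := Real.log_pos (by norm_num)
    have := hsum2.mul_right (Real.log 2)
    refine this.congr fun k => ?_
    have hk : ((k:ℝ) + 1) ≠ 0 := by positivity
    field_simp
  have : Summable (fun k : ℕ => ((k:ℕ) : ℝ)⁻¹) := by
    rw [← summable_nat_add_iff 1]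
    exact hsum3.congr fun k => by push_cast; ring
  exact Real.not_summable_natCast_inv this

/-- The moments `mₙ = (n!)² Kₙ²`, with `Kₙ = ∫_0^∞ (ln(1+x))ⁿ e^{-x} dx`, satisfy
Carleman's condition `∑ₙ mₙ^{-1/(2n)} = ∞` but do not satisfy the quadratic rate of
growth condition `m_{n+1} ≤ C (n+1)² mₙ`. -/
theorem carleman_holds_quadratic_growth_fails
    (K : ℕ → ℝ)
    (hK : ∀ n : ℕ, K n = ∫ x in Set.Ioi (0 : ℝ), (Real.log (1 + x)) ^ n * Real.exp (-x))
    (m : ℕ → ℝ)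
    (hm : ∀ n : ℕ, m n = (n.factorial : ℝ) ^ 2 * K n ^ 2) :
    Tendsto (fun N : ℕ => ∑ n ∈ Finset.Icc 1 N, m n ^ (-(1 : ℝ) / (2 * n)))
      atTop atTop ∧
    ¬ ∃ C : ℝ, 0 < C ∧ ∀ n : ℕ, 1 ≤ n → m (n + 1) ≤ C * (n + 1) ^ 2 * m n := by
  have hKpos : ∀ n : ℕ, 0 < K n := by
    intro n
    rw [hK n]
    have h2 := aux_lower n (t := 1) one_pos
    have h : (0:ℝ) < 1 ^ n * Real.exp (-(Real.exp 1)) := by positivity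
    linarith
  constructor
  · -- Carleman's condition
    have hterm : ∀ n : ℕ, 1 ≤ n →
        (10:ℝ)⁻¹ * ((n:ℝ) * Real.log (n + 1))⁻¹ ≤ m n ^ (-(1 : ℝ) / (2 * n)) := by
      intro n hn
      have hn0 : (0:ℝ) < n := by exact_mod_cast hn
      have h1n : (1:ℝ) ≤ (n:ℝ) := by exact_mod_cast hn
      set L : ℝ := Real.log (1 + 6 * (n:ℝ) ^ 2) with hL
      have hL1 : (1:ℝ) ≤ L := aux_L_one n hn
      have hK2 : K n ≤ 2 * L ^ n := by rw [hK n]; exact aux_upper n hn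
      have hfpos : (0:ℝ) < (n.factorial : ℝ) := by exact_mod_cast n.factorial_pos
      have hP : 0 < (n.factorial : ℝ) * K n := mul_pos hfpos (hKpos n)
      have hmP : m n = ((n.factorial : ℝ) * K n) ^ 2 := by rw [hm n]; ring
      have hQpos : (0:ℝ) < 2 * (n:ℝ) * L := by nlinarith
      have hPQ : (n.factorial : ℝ) * K n ≤ (2 * (n:ℝ) * L) ^ n := by
        have hf : ((n.factorial : ℕ) : ℝ) ≤ (n:ℝ) ^ n := by
          exact_mod_cast Nat.factorial_le_pow n
        have h2p : (2:ℝ) ≤ 2 ^ n := le_self_pow₀ one_le_two (by omega)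
        have hLn : (0:ℝ) ≤ L ^ n := by positivity
        calc (n.factorial : ℝ) * K n ≤ (n:ℝ) ^ n * (2 * L ^ n) :=
              mul_le_mul hf hK2 (hKpos n).le (by positivity)
          _ ≤ (n:ℝ) ^ n * (2 ^ n * L ^ n) := by
              refine mul_le_mul_of_nonneg_left ?_ (by positivity)
              exact mul_le_mul_of_nonneg_right h2p hLn
          _ = (2 * (n:ℝ) * L) ^ n := by rw [mul_pow, mul_pow]; ring
      have hrpow : m n ^ (-(1 : ℝ) / (2 * n)) = ((n.factorial : ℝ) * K n) ^ (-(n:ℝ)⁻¹) := by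
        rw [hmP, ← Real.rpow_natCast ((n.factorial : ℝ) * K n) 2, ← Real.rpow_mul hP.le]
        congr 1
        push_cast
        field_simp
      have hmono : ((2 * (n:ℝ) * L) ^ n : ℝ) ^ (-(n:ℝ)⁻¹)
          ≤ ((n.factorial : ℝ) * K n) ^ (-(n:ℝ)⁻¹) :=
        Real.rpow_le_rpow_of_nonpos hP hPQ (neg_nonpos.2 (by positivity))
      have hval : ((2 * (n:ℝ) * L) ^ n : ℝ) ^ (-(n:ℝ)⁻¹) = (2 * (n:ℝ) * L)⁻¹ := by
        rw [← Real.rpow_natCast (2 * (n:ℝ) * L) n, ← Real.rpow_mul hQpos.le]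
        rw [mul_neg, mul_inv_cancel₀ hn0.ne', Real.rpow_neg_one]
      have hlogn : (0:ℝ) < Real.log ((n:ℝ) + 1) := Real.log_pos (by linarith)
      have hL5 : L ≤ 5 * Real.log ((n:ℝ) + 1) := by
        have hpoly : 1 + 6 * (n:ℝ) ^ 2 ≤ ((n:ℝ) + 1) ^ 5 := by
          have h3 : ((n:ℝ) + 1) ^ 3 ≤ ((n:ℝ) + 1) ^ 5 :=
            pow_le_pow_right₀ (by linarith) (by norm_num)
          nlinarith [sq_nonneg (2 * (n:ℝ) - 3), hn0]
        calc L ≤ Real.log (((n:ℝ) + 1) ^ 5) := Real.log_le_log (by positivity) hpoly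
          _ = 5 * Real.log ((n:ℝ) + 1) := by rw [Real.log_pow]; norm_num
      have hfinal : (10:ℝ)⁻¹ * ((n:ℝ) * Real.log ((n:ℝ) + 1))⁻¹ ≤ (2 * (n:ℝ) * L)⁻¹ := by
        rw [← mul_inv]
        refine inv_anti₀ hQpos ?_
        nlinarith
      rw [hrpow]
      exact hfinal.trans (hval ▸ hmono)
    have hdiv0 : Tendsto (fun N : ℕ => ∑ n ∈ Finset.range N,
        ((n:ℝ) * Real.log (n + 1))⁻¹) atTop atTop :=
      (not_summable_iff_tendsto_nat_atTop_of_nonneg aux_f_nonneg).1 aux_not_summable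
    have hsum_eq : ∀ N : ℕ, ∑ n ∈ Finset.range (N + 1), ((n:ℝ) * Real.log (n + 1))⁻¹
        = ∑ n ∈ Finset.Icc 1 N, ((n:ℝ) * Real.log (n + 1))⁻¹ := by
      intro N
      induction N with
      | zero => simp
      | succ N ih =>
        rw [Finset.sum_range_succ, ih, ← Finset.insert_Icc_right_eq_Icc_add_one (by omega),
          Finset.sum_insert (by simp)]
        ring
    have hdiv1 : Tendsto (fun N : ℕ => ∑ n ∈ Finset.Icc 1 N,
        ((n:ℝ) * Real.log (n + 1))⁻¹) atTop atTop := by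
      have h := hdiv0.comp (tendsto_add_atTop_nat 1)
      refine Tendsto.congr (fun N => ?_) h
      exact hsum_eq N
    have hdiv2 : Tendsto (fun N : ℕ => (10:ℝ)⁻¹ * ∑ n ∈ Finset.Icc 1 N,
        ((n:ℝ) * Real.log (n + 1))⁻¹) atTop atTop :=
      (Filter.tendsto_const_mul_atTop_of_pos (by norm_num)).2 hdiv1
    refine tendsto_atTop_mono (fun N => ?_) hdiv2
    rw [Finset.mul_sum]
    refine Finset.sum_le_sum fun n hn => ?_
    exact hterm n (Finset.mem_Icc.1 hn).1
  · -- quadratic growth fails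
    rintro ⟨C, hC, h⟩
    have hsC : 0 < Real.sqrt C := Real.sqrt_pos.2 hC
    have hstep : ∀ n : ℕ, 1 ≤ n → K (n + 1) ≤ Real.sqrt C * K n := by
      intro n hn
      have h1 := h n hn
      rw [hm, hm] at h1
      have hn1 : (0:ℝ) < (n:ℝ) + 1 := by positivity
      have hfpos : (0:ℝ) < (n.factorial : ℝ) := by exact_mod_cast n.factorial_pos
      have hfact : ((n + 1).factorial : ℝ) = ((n:ℝ) + 1) * (n.factorial : ℝ) := by
        push_cast [Nat.factorial_succ]; ring
      rw [hfact] at h1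
      have hA : (0:ℝ) < (((n:ℝ) + 1) * (n.factorial : ℝ)) ^ 2 := by positivity
      have h1' : (((n:ℝ) + 1) * (n.factorial : ℝ)) ^ 2 * K (n + 1) ^ 2
          ≤ (((n:ℝ) + 1) * (n.factorial : ℝ)) ^ 2 * (C * K n ^ 2) := by
        push_cast at h1 ⊢
        nlinarith [h1]
      have hKK : K (n + 1) ^ 2 ≤ C * K n ^ 2 := le_of_mul_le_mul_left h1' hA
      have hsq : K (n + 1) = Real.sqrt (K (n + 1) ^ 2) := (Real.sqrt_sq (hKpos _).le).symm
      rw [hsq]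
      calc Real.sqrt (K (n + 1) ^ 2) ≤ Real.sqrt (C * K n ^ 2) := Real.sqrt_le_sqrt hKK
        _ = Real.sqrt C * K n := by
            rw [Real.sqrt_mul hC.le, Real.sqrt_sq (hKpos n).le]
    have hgeo : ∀ j : ℕ, K (j + 1) ≤ Real.sqrt C ^ j * K 1 := by
      intro j
      induction j with
      | zero => simp
      | succ j ih =>
        calc K (j + 1 + 1) ≤ Real.sqrt C * K (j + 1) := hstep (j + 1) (by omega)
          _ ≤ Real.sqrt C * (Real.sqrt C ^ j * K 1) :=
              mul_le_mul_of_nonneg_left ih hsC.le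
          _ = Real.sqrt C ^ (j + 1) * K 1 := by ring
    set t : ℝ := Real.sqrt C + 1 with htdef
    have ht : 0 < t := by positivity
    have hlow : ∀ j : ℕ, t ^ (j + 1) * Real.exp (-(Real.exp t)) ≤ K (j + 1) := by
      intro j; rw [hK]; exact aux_lower (j + 1) ht
    set D : ℝ := K 1 * Real.exp (Real.exp t) with hD
    have hr : 1 < t / Real.sqrt C := (one_lt_div hsC).2 (by rw [htdef]; linarith)
    obtain ⟨j, hj⟩ := pow_unbounded_of_one_lt (D / t) hr
    have hcontr : (t / Real.sqrt C) ^ j ≤ D / t := by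
      rw [div_pow, div_le_div_iff₀ (by positivity) ht]
      have h1 := (hlow j).trans (hgeo j)
      have hexp : (0:ℝ) < Real.exp (Real.exp t) := Real.exp_pos _
      have h2 : t ^ (j + 1) ≤ Real.sqrt C ^ j * K 1 * Real.exp (Real.exp t) := by
        have h3 := mul_le_mul_of_nonneg_right h1 hexp.le
        rw [mul_assoc, ← Real.exp_add] at h3
        simpa using h3
      calc t ^ j * t = t ^ (j + 1) := by ring
        _ ≤ Real.sqrt C ^ j * K 1 * Real.exp (Real.exp t) := h2
        _ = D * Real.sqrt C ^ j := by rw [hD]; ring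
    linarith [hj, hcontr]
end

section
/- Define m_n := (n!)^2 K_n^2 for n ≥ 1, where K_n := ∫_0^∞ (ln(1+x))^n e^{-x} dx. Then m_n^{1/(2n)} = (n/e) · ln(n+1) · (1 + o(1)) as n → ∞; that is, the quotient e · m_n^{1/(2n)} / (n · ln(n+1)) tends to 1 as n → ∞. -/
open MeasureTheory Filter Topology Real Set

lemma int_pow_exp (k : ℕ) :
    ∫ x in Set.Ioi (0:ℝ), x ^ k * Real.exp (-x) = k.factorial := by
  have h : (0:ℝ) < (k:ℝ) + 1 := by positivity
  have h1 := Real.Gamma_eq_integral h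
  rw [Real.Gamma_nat_eq_factorial] at h1
  rw [h1]
  refine setIntegral_congr_fun measurableSet_Ioi (fun x hx => ?_)
  rw [add_sub_cancel_right, Real.rpow_natCast, mul_comm]

lemma integrableOn_pow_exp (k : ℕ) :
    IntegrableOn (fun x : ℝ => x ^ k * Real.exp (-x)) (Set.Ioi 0) := by
  have := Real.GammaIntegral_convergent (s := (k:ℝ) + 1) (by positivity)
  refine this.congr_fun (fun x hx => ?_) measurableSet_Ioi
  rw [add_sub_cancel_right]; beta_reduce; rw [Real.rpow_natCast, mul_comm]

lemma integrableOn_f (n : ℕ) :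
    IntegrableOn (fun x : ℝ => (Real.log (1 + x)) ^ n * Real.exp (-x)) (Set.Ioi 0) := by
  have hmeas : AEStronglyMeasurable (fun x : ℝ => (Real.log (1 + x)) ^ n * Real.exp (-x))
      (volume.restrict (Set.Ioi 0)) := by
    apply Measurable.aestronglyMeasurable
    exact ((Real.measurable_log.comp (measurable_const.add measurable_id)).pow_const n).mul
      (measurable_id.neg.exp)
  refine (integrableOn_pow_exp n).mono' hmeas ?_
  filter_upwards [ae_restrict_mem measurableSet_Ioi] with x hx
  have hx0 : (0:ℝ) < x := hx
  have hlog : 0 ≤ Real.log (1 + x) := Real.log_nonneg (by linarith)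
  rw [Real.norm_eq_abs, abs_mul, abs_of_nonneg (pow_nonneg hlog n),
    abs_of_nonneg (Real.exp_pos _).le]
  have : Real.log (1 + x) ≤ x := by
    have := Real.log_le_sub_one_of_pos (x := 1 + x) (by linarith)
    linarith
  exact mul_le_mul_of_nonneg_right (pow_le_pow_left₀ hlog this n) (Real.exp_pos _).le

lemma log_one_add_ge (t : ℝ) (ht : 0 ≤ t) : t / (1 + t) ≤ Real.log (1 + t) := by
  have h1 : (0:ℝ) < 1 + t := by linarith
  have := Real.log_le_sub_one_of_pos (x := (1 + t)⁻¹) (by positivity)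
  rw [Real.log_inv] at this
  have h2 : (1 + t)⁻¹ = 1 - t / (1 + t) := by field_simp; ring
  rw [h2] at this; linarith

lemma log_le_aux (n : ℕ) (hn : 1 ≤ n) (x : ℝ) (hx : 0 ≤ x) :
    Real.log (1 + x) ≤ Real.log (1 + n) * (1 + x / n) := by
  have hn0 : (0:ℝ) < n := by exact_mod_cast hn
  have hlogn : (n:ℝ) / (1 + n) ≤ Real.log (1 + n) := log_one_add_ge n hn0.le
  have hlogn0 : 0 ≤ Real.log (1 + n) := Real.log_nonneg (by linarith)
  rcases le_total x n with h | h
  · calc Real.log (1 + x) ≤ Real.log (1 + n) :=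
          Real.log_le_log (by linarith) (by linarith)
    _ ≤ Real.log (1 + n) * (1 + x / n) := by
        nlinarith [div_nonneg hx hn0.le]
  · have h3 : Real.log (1 + x) - Real.log (1 + n) = Real.log ((1 + x) / (1 + n)) :=
      (Real.log_div (by linarith) (by linarith)).symm
    have h4 : Real.log ((1 + x) / (1 + n)) ≤ (1 + x) / (1 + n) - 1 :=
      Real.log_le_sub_one_of_pos (by positivity)
    have h5 : (1 + x) / (1 + n) - 1 = (x - n) / (1 + n) := by field_simp; ring
    -- need : (x - n)/(1+n) ≤ log(1+n) * x / n
    have h6 : (x - n) / (1 + n) ≤ x / (1 + n) := by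
      apply div_le_div_of_nonneg_right ?_ (by linarith)
      linarith
    have h7 : x / (1 + n) ≤ Real.log (1 + n) * (x / n) := by
      have he : x / (1 + n) = (n / (1 + n)) * (x / n) := by field_simp
      rw [he]
      exact mul_le_mul_of_nonneg_right hlogn (div_nonneg (by linarith) hn0.le)
    have h8 : Real.log (1 + n) * (1 + x / n)
        = Real.log (1 + n) + Real.log (1 + n) * (x / n) := by ring
    linarith

lemma K_upper (n : ℕ) (hn : 1 ≤ n) :
    (∫ x in Set.Ioi (0:ℝ), (Real.log (1 + x)) ^ n * Real.exp (-x))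
      ≤ (n + 1) * (Real.log (1 + n)) ^ n := by
  have hn0 : (0:ℝ) < n := by exact_mod_cast hn
  set c : ℕ → ℝ := fun k => Real.log (1 + n) ^ n * ((n.choose k : ℝ) / n ^ k) with hc
  have hck : ∀ k, 0 ≤ c k := by
    intro k
    apply mul_nonneg (pow_nonneg (Real.log_nonneg (by linarith)) n)
    positivity
  have hint : ∀ k ∈ Finset.range (n + 1),
      IntegrableOn (fun x : ℝ => c k * (x ^ k * Real.exp (-x))) (Set.Ioi 0) :=
    fun k _ => (integrableOn_pow_exp k).const_mul _
  have hsum : IntegrableOn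
      (fun x : ℝ => ∑ k ∈ Finset.range (n + 1), c k * (x ^ k * Real.exp (-x)))
      (Set.Ioi 0) := integrable_finset_sum _ hint
  have hstep : (∫ x in Set.Ioi (0:ℝ), (Real.log (1 + x)) ^ n * Real.exp (-x))
      ≤ ∫ x in Set.Ioi (0:ℝ), ∑ k ∈ Finset.range (n + 1), c k * (x ^ k * Real.exp (-x)) := by
    refine setIntegral_mono_on (integrableOn_f n) hsum measurableSet_Ioi (fun x hx => ?_)
    have hx0 : (0:ℝ) < x := hx
    have hexpand : ∑ k ∈ Finset.range (n + 1), c k * (x ^ k * Real.exp (-x))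
        = Real.log (1 + n) ^ n * (1 + x / n) ^ n * Real.exp (-x) := by
      rw [add_comm (1:ℝ) (x/n), add_pow, Finset.mul_sum, Finset.sum_mul]
      refine Finset.sum_congr rfl (fun k hk => ?_)
      simp only [hc, div_pow, one_pow]
      ring
    rw [hexpand]
    have hle := log_le_aux n hn x hx0.le
    have h1 : Real.log (1 + x) ^ n ≤ (Real.log (1 + n) * (1 + x / n)) ^ n :=
      pow_le_pow_left₀ (Real.log_nonneg (by linarith)) hle n
    rw [mul_pow] at h1
    exact mul_le_mul_of_nonneg_right (by rw [← mul_pow] at h1 ⊢; rwa [mul_pow] at h1 ⊢)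
      (Real.exp_pos _).le
  have hval : (∫ x in Set.Ioi (0:ℝ), ∑ k ∈ Finset.range (n + 1), c k * (x ^ k * Real.exp (-x)))
      = ∑ k ∈ Finset.range (n + 1), c k * k.factorial := by
    rw [integral_finset_sum _ hint]
    refine Finset.sum_congr rfl (fun k _ => ?_)
    rw [integral_const_mul, int_pow_exp]
  have hterm : ∀ k ∈ Finset.range (n + 1), c k * k.factorial ≤ Real.log (1 + n) ^ n := by
    intro k _
    have hdn : (n.choose k * k.factorial : ℕ) ≤ n ^ k := by
      rw [Nat.mul_comm, ← Nat.descFactorial_eq_factorial_mul_choose]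
      exact Nat.descFactorial_le_pow n k
    have hd : (n.choose k : ℝ) * k.factorial ≤ (n : ℝ) ^ k := by exact_mod_cast hdn
    rw [hc]
    have hnk : (0:ℝ) < (n:ℝ) ^ k := by positivity
    calc Real.log (1 + n) ^ n * ((n.choose k : ℝ) / n ^ k) * k.factorial
        = Real.log (1 + n) ^ n * (((n.choose k : ℝ) * k.factorial) / n ^ k) := by ring
      _ ≤ Real.log (1 + n) ^ n * 1 := by
          refine mul_le_mul_of_nonneg_left ?_ (pow_nonneg (Real.log_nonneg (by linarith)) n)
          rw [div_le_one hnk]; exact hd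
      _ = Real.log (1 + n) ^ n := mul_one _
  calc (∫ x in Set.Ioi (0:ℝ), (Real.log (1 + x)) ^ n * Real.exp (-x))
      ≤ ∑ k ∈ Finset.range (n + 1), c k * k.factorial := hstep.trans (le_of_eq hval)
    _ ≤ (Finset.range (n + 1)).card • Real.log (1 + n) ^ n :=
        Finset.sum_le_card_nsmul _ _ _ hterm
    _ = (n + 1) * Real.log (1 + n) ^ n := by
        rw [Finset.card_range, nsmul_eq_mul]; push_cast; ring

lemma f_nonneg (n : ℕ) : ∀ᵐ x ∂(volume.restrict (Set.Ioi (0:ℝ))),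
    0 ≤ (Real.log (1 + x)) ^ n * Real.exp (-x) := by
  filter_upwards [ae_restrict_mem measurableSet_Ioi] with x hx
  have hx0 : (0:ℝ) < x := hx
  exact mul_nonneg (pow_nonneg (Real.log_nonneg (by linarith)) n) (Real.exp_pos _).le

lemma K_lower (n : ℕ) (hn : 1 ≤ n) :
    (Real.log (1 + (n / Real.log (n + 1)))) ^ n *
        Real.exp (-((n / Real.log (n + 1)) + 1))
      ≤ ∫ x in Set.Ioi (0:ℝ), (Real.log (1 + x)) ^ n * Real.exp (-x) := by
  set a : ℝ := n / Real.log (n + 1) with ha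
  have hlogn : 0 < Real.log ((n:ℝ) + 1) := Real.log_pos (by exact_mod_cast by omega)
  have ha0 : 0 < a := by
    apply div_pos (by exact_mod_cast hn) hlogn
  have hsub : Set.Ioc a (a + 1) ⊆ Set.Ioi (0:ℝ) := fun x hx => lt_trans ha0 hx.1
  have hC : ∀ x ∈ Set.Ioc a (a + 1),
      Real.log (1 + a) ^ n * Real.exp (-(a + 1))
        ≤ (Real.log (1 + x)) ^ n * Real.exp (-x) := by
    intro x hx
    have h1 : Real.log (1 + a) ^ n ≤ Real.log (1 + x) ^ n := by
      apply pow_le_pow_left₀ (Real.log_nonneg (by linarith))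
      exact Real.log_le_log (by linarith) (by linarith [hx.1])
    have h2 : Real.exp (-(a + 1)) ≤ Real.exp (-x) :=
      Real.exp_le_exp.2 (by linarith [hx.2])
    exact mul_le_mul h1 h2 (Real.exp_pos _).le (pow_nonneg
      (Real.log_nonneg (by linarith [hx.1, ha0])) n)
  have hμ : (volume (Set.Ioc a (a + 1))).toReal = 1 := by
    rw [Real.volume_Ioc]; simp
  have hstep := setIntegral_ge_of_const_le_real (c := Real.log (1 + a) ^ n * Real.exp (-(a + 1)))
    measurableSet_Ioc (by rw [Real.volume_Ioc]; exact ENNReal.ofReal_ne_top)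
    hC ((integrableOn_f n).mono_set hsub)
  rw [measureReal_def, hμ, mul_one] at hstep
  refine hstep.trans ?_
  exact setIntegral_mono_set (integrableOn_f n) (f_nonneg n)
    (HasSubset.Subset.eventuallyLE hsub)

lemma K_pos (n : ℕ) (hn : 1 ≤ n) :
    0 < ∫ x in Set.Ioi (0:ℝ), (Real.log (1 + x)) ^ n * Real.exp (-x) := by
  refine lt_of_lt_of_le ?_ (K_lower n hn)
  have hlogn : 0 < Real.log ((n:ℝ) + 1) := Real.log_pos (by exact_mod_cast by omega)
  have ha0 : (0:ℝ) < n / Real.log (n + 1) := div_pos (by exact_mod_cast hn) hlogn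
  have : 0 < Real.log (1 + n / Real.log (n + 1)) := Real.log_pos (by linarith)
  positivity

lemma log_div_nat_tendsto : Tendsto (fun n : ℕ => Real.log n / n) atTop (𝓝 0) := by
  have h := Real.isLittleO_log_id_atTop.tendsto_div_nhds_zero
  have := h.comp tendsto_natCast_atTop_atTop (α := ℕ)
  simpa [Function.comp_def] using this

lemma tendsto_A :
    Tendsto (fun n : ℕ => Real.log n.factorial / n - Real.log n + 1) atTop (𝓝 0) := by
  have hS : Tendsto (fun n : ℕ => Real.log (Stirling.stirlingSeq n) / n) atTop (𝓝 0) := by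
    have hpos : (0:ℝ) < Real.sqrt π := Real.sqrt_pos.2 Real.pi_pos
    have hlog : Tendsto (fun n : ℕ => Real.log (Stirling.stirlingSeq n)) atTop
        (𝓝 (Real.log (Real.sqrt π))) :=
      ((Real.continuousAt_log hpos.ne').tendsto).comp Stirling.tendsto_stirlingSeq_sqrt_pi
    exact hlog.div_atTop tendsto_natCast_atTop_atTop
  have h2 : Tendsto (fun n : ℕ => Real.log 2 / 2 / n) atTop (𝓝 0) :=
    tendsto_const_div_atTop_nhds_zero_nat _
  have h3 : Tendsto (fun n : ℕ => Real.log n / n / 2) atTop (𝓝 0) := by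
    simpa using log_div_nat_tendsto.div_const 2
  have hsum := (hS.add h2).add h3
  rw [add_zero, add_zero] at hsum
  refine hsum.congr' ?_
  filter_upwards [eventually_ge_atTop 1] with n hn
  have hn0 : (0:ℝ) < n := by exact_mod_cast hn
  have hform := Stirling.log_stirlingSeq_formula n
  have hlog2n : Real.log (2 * n) = Real.log 2 + Real.log n :=
    Real.log_mul two_ne_zero hn0.ne'
  have hlogne : Real.log ((n:ℝ) / Real.exp 1) = Real.log n - 1 := by
    rw [Real.log_div hn0.ne' (Real.exp_pos 1).ne', Real.log_exp]
  have hfact : Real.log n.factorial = Real.log (Stirling.stirlingSeq n)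
      + 1 / 2 * (Real.log 2 + Real.log n) + n * (Real.log n - 1) := by
    rw [← hlog2n, ← hlogne]; linarith [hform]
  rw [hfact]
  field_simp
  ring

lemma hlogtop : Tendsto (fun n : ℕ => Real.log ((n:ℝ) + 1)) atTop atTop :=
  Real.tendsto_log_atTop.comp (tendsto_atTop_add_const_right atTop 1 tendsto_natCast_atTop_atTop)

lemma tendsto_U : Tendsto (fun n : ℕ => Real.log ((n:ℝ) + 1) / n) atTop (𝓝 0) := by
  have h1 : Tendsto (fun n : ℕ => Real.log ((n:ℝ) + 1) / ((n:ℝ) + 1)) atTop (𝓝 0) := by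
    have h := Real.isLittleO_log_id_atTop.tendsto_div_nhds_zero
    have := h.comp (tendsto_atTop_add_const_right atTop 1 tendsto_natCast_atTop_atTop (α := ℕ))
    simpa [Function.comp_def] using this
  have h2 : Tendsto (fun n : ℕ => ((n:ℝ) + 1) / n) atTop (𝓝 1) := by
    have := tendsto_one_div_atTop_nhds_zero_nat.const_add (1:ℝ)
    rw [add_zero] at this
    refine this.congr' ?_
    filter_upwards [eventually_ge_atTop 1] with n hn
    have hn0 : (0:ℝ) < n := by exact_mod_cast hn
    field_simp
  have := h1.mul h2
  rw [zero_mul] at this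
  refine this.congr' ?_
  filter_upwards [eventually_ge_atTop 1] with n hn
  have hn0 : (0:ℝ) < n := by exact_mod_cast hn
  field_simp

lemma tendsto_r : Tendsto
    (fun n : ℕ => (Real.log n - Real.log (Real.log ((n:ℝ) + 1))) / Real.log ((n:ℝ) + 1))
    atTop (𝓝 1) := by
  have hr2 : Tendsto (fun n : ℕ => Real.log (Real.log ((n:ℝ) + 1)) / Real.log ((n:ℝ) + 1))
      atTop (𝓝 0) := by
    have h := Real.isLittleO_log_id_atTop.tendsto_div_nhds_zero
    have := h.comp hlogtop
    simpa [Function.comp_def] using this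
  have hr1 : Tendsto (fun n : ℕ => Real.log n / Real.log ((n:ℝ) + 1)) atTop (𝓝 1) := by
    have hlow : Tendsto (fun n : ℕ => 1 - Real.log 2 / Real.log ((n:ℝ) + 1)) atTop (𝓝 1) := by
      have := (tendsto_const_nhds (x := Real.log 2) (f := atTop (α := ℕ))).div_atTop hlogtop
      have h2 := (tendsto_const_nhds (x := (1:ℝ)) (f := atTop (α := ℕ))).sub this
      simpa using h2
    refine tendsto_of_tendsto_of_tendsto_of_le_of_le' hlow tendsto_const_nhds ?_ ?_
    · filter_upwards [eventually_ge_atTop 2] with n hn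
      have hn0 : (2:ℝ) ≤ n := by exact_mod_cast hn
      have hpos : 0 < Real.log ((n:ℝ) + 1) := Real.log_pos (by linarith)
      have hkey : Real.log ((n:ℝ) + 1) - Real.log 2 ≤ Real.log n := by
        have h2n : Real.log ((n:ℝ) + 1) ≤ Real.log (2 * n) :=
          Real.log_le_log (by linarith) (by linarith)
        rw [Real.log_mul two_ne_zero (by linarith)] at h2n
        linarith
      have : (Real.log ((n:ℝ) + 1) - Real.log 2) / Real.log ((n:ℝ) + 1)
          ≤ Real.log n / Real.log ((n:ℝ) + 1) := by
        gcongr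
      calc 1 - Real.log 2 / Real.log ((n:ℝ) + 1)
          = (Real.log ((n:ℝ) + 1) - Real.log 2) / Real.log ((n:ℝ) + 1) := by
            field_simp
        _ ≤ Real.log n / Real.log ((n:ℝ) + 1) := this
    · filter_upwards [eventually_ge_atTop 1] with n hn
      have hn0 : (1:ℝ) ≤ n := by exact_mod_cast hn
      have hpos : 0 < Real.log ((n:ℝ) + 1) := Real.log_pos (by linarith)
      rw [div_le_one hpos]
      exact Real.log_le_log (by linarith) (by linarith)
  have := hr1.sub hr2
  rw [sub_zero] at this
  refine this.congr (fun n => ?_)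
  rw [sub_div]

lemma tendsto_V : Tendsto
    (fun n : ℕ =>
      Real.log ((Real.log n - Real.log (Real.log ((n:ℝ) + 1))) / Real.log ((n:ℝ) + 1))
        - 1 / Real.log ((n:ℝ) + 1) - 1 / n)
    atTop (𝓝 0) := by
  have h1 : Tendsto (fun n : ℕ =>
      Real.log ((Real.log n - Real.log (Real.log ((n:ℝ) + 1))) / Real.log ((n:ℝ) + 1)))
      atTop (𝓝 0) := by
    have := ((Real.continuousAt_log one_ne_zero).tendsto).comp tendsto_r
    simpa [Function.comp_def] using this
  have h2 : Tendsto (fun n : ℕ => 1 / Real.log ((n:ℝ) + 1)) atTop (𝓝 0) :=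
    tendsto_const_nhds.div_atTop hlogtop
  have h3 : Tendsto (fun n : ℕ => 1 / (n:ℝ)) atTop (𝓝 0) :=
    tendsto_one_div_atTop_nhds_zero_nat
  have := (h1.sub h2).sub h3
  simpa using this

lemma tendsto_B : Tendsto (fun n : ℕ =>
    Real.log (∫ x in Set.Ioi (0:ℝ), (Real.log (1 + x)) ^ n * Real.exp (-x)) / n
      - Real.log (Real.log ((n:ℝ) + 1))) atTop (𝓝 0) := by
  refine tendsto_of_tendsto_of_tendsto_of_le_of_le' tendsto_V tendsto_U ?_ ?_
  · -- lower bound : V n ≤ B n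
    filter_upwards [eventually_ge_atTop 1] with n hn
    have hn0 : (1:ℝ) ≤ n := by exact_mod_cast hn
    have hnpos : (0:ℝ) < n := by linarith
    have hP : 0 < Real.log ((n:ℝ) + 1) := Real.log_pos (by linarith)
    set P : ℝ := Real.log ((n:ℝ) + 1) with hPdef
    set a : ℝ := n / P with ha
    have hPn : P < n := by
      have := Real.log_lt_sub_one_of_pos (x := (n:ℝ) + 1) (by linarith) (by linarith)
      rw [hPdef]; linarith
  -- a > 1
    have ha1 : 1 < a := (one_lt_div hP).2 hPn
    have ha0 : 0 < a := by linarith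
    have hL : 0 < Real.log (1 + a) := Real.log_pos (by linarith)
    have hloga : 0 < Real.log a := Real.log_pos ha1
    have hloga_eq : Real.log a = Real.log n - Real.log P := Real.log_div hnpos.ne' hP.ne'
    set KI : ℝ := ∫ x in Set.Ioi (0:ℝ), (Real.log (1 + x)) ^ n * Real.exp (-x) with hKI
    have hKlow : Real.log (1 + a) ^ n * Real.exp (-(a + 1)) ≤ KI := K_lower n hn
    have hlogK : (n:ℝ) * Real.log (Real.log (1 + a)) - (a + 1) ≤ Real.log KI := by
      have h1 := Real.log_le_log (by positivity) hKlow
      rwa [Real.log_mul (by positivity) (Real.exp_pos _).ne', Real.log_pow,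
        Real.log_exp] at h1
    have hdiv : Real.log (Real.log (1 + a)) - (a + 1) / n ≤ Real.log KI / n := by
      have h2 : ((n:ℝ) * Real.log (Real.log (1 + a)) - (a + 1)) / n ≤ Real.log KI / n := by
        gcongr
      calc Real.log (Real.log (1 + a)) - (a + 1) / n
          = ((n:ℝ) * Real.log (Real.log (1 + a)) - (a + 1)) / n := by
            field_simp
        _ ≤ Real.log KI / n := h2
    have haon : (a + 1) / n = 1 / P + 1 / n := by
      rw [ha]; field_simp
    have hsplit : Real.log (Real.log (1 + a)) - Real.log P
        = Real.log (Real.log (1 + a) / P) := (Real.log_div hL.ne' hP.ne').symm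
    have hrpos : 0 < (Real.log n - Real.log P) / P := by
      rw [← hloga_eq]; exact div_pos hloga hP
    have hmono : Real.log ((Real.log n - Real.log P) / P)
        ≤ Real.log (Real.log (1 + a) / P) := by
      apply Real.log_le_log hrpos
      rw [← hloga_eq]
      have hup2 : Real.log a ≤ Real.log (1 + a) := Real.log_le_log ha0 (by linarith)
      gcongr
    calc Real.log ((Real.log n - Real.log P) / P) - 1 / P - 1 / n
        ≤ Real.log (Real.log (1 + a) / P) - 1 / P - 1 / n := by linarith
      _ = Real.log (Real.log (1 + a)) - Real.log P - (a + 1) / n := by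
          rw [← hsplit, haon]; ring
      _ ≤ Real.log KI / n - Real.log P := by linarith
  · -- upper bound : B n ≤ U n
    filter_upwards [eventually_ge_atTop 1] with n hn
    have hn0 : (1:ℝ) ≤ n := by exact_mod_cast hn
    have hnpos : (0:ℝ) < n := by linarith
    have hP : 0 < Real.log ((n:ℝ) + 1) := Real.log_pos (by linarith)
    have hup : (∫ x in Set.Ioi (0:ℝ), (Real.log (1 + x)) ^ n * Real.exp (-x))
        ≤ ((n:ℝ) + 1) * (Real.log ((n:ℝ) + 1)) ^ n := by
      have := K_upper n hn
      rwa [add_comm (1:ℝ) (n:ℝ)] at this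
    have hKpos := K_pos n hn
    have h1 := Real.log_le_log hKpos hup
    rw [Real.log_mul (by positivity) (by positivity), Real.log_pow] at h1
    have h2 : Real.log (∫ x in Set.Ioi (0:ℝ), (Real.log (1 + x)) ^ n * Real.exp (-x)) / n
        ≤ (Real.log ((n:ℝ) + 1) + n * Real.log (Real.log ((n:ℝ) + 1))) / n := by
      gcongr
    have h3 : (Real.log ((n:ℝ) + 1) + n * Real.log (Real.log ((n:ℝ) + 1))) / n
        = Real.log ((n:ℝ) + 1) / n + Real.log (Real.log ((n:ℝ) + 1)) := by
      field_simp
    linarith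

/-- With `mₙ = (n!)² Kₙ²` and `Kₙ = ∫_0^∞ (ln(1+x))ⁿ e^{-x} dx`, one has
`mₙ^{1/(2n)} = (n/e) ln(n+1) (1 + o(1))` as `n → ∞`, i.e. the quotient
`e · mₙ^{1/(2n)} / (n ln(n+1))` tends to `1`. -/
theorem moment_root_asymptotics
    (K : ℕ → ℝ)
    (hK : ∀ n : ℕ, K n = ∫ x in Set.Ioi (0 : ℝ), (Real.log (1 + x)) ^ n * Real.exp (-x))
    (m : ℕ → ℝ)
    (hm : ∀ n : ℕ, m n = (n.factorial : ℝ) ^ 2 * K n ^ 2) :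
    Tendsto
      (fun n : ℕ =>
        Real.exp 1 * m n ^ ((1 : ℝ) / (2 * n)) / (n * Real.log (n + 1)))
      atTop (𝓝 1) := by
  have key : Tendsto (fun n : ℕ =>
      (Real.log n.factorial / n - Real.log n + 1)
        + (Real.log (∫ x in Set.Ioi (0:ℝ), (Real.log (1 + x)) ^ n * Real.exp (-x)) / n
            - Real.log (Real.log ((n:ℝ) + 1)))) atTop (𝓝 0) := by
    have := tendsto_A.add tendsto_B
    simpa using this
  have hexp : Tendsto (fun n : ℕ => Real.exp
      ((Real.log n.factorial / n - Real.log n + 1)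
        + (Real.log (∫ x in Set.Ioi (0:ℝ), (Real.log (1 + x)) ^ n * Real.exp (-x)) / n
            - Real.log (Real.log ((n:ℝ) + 1))))) atTop (𝓝 1) := by
    have := (Real.continuous_exp.continuousAt (x := (0:ℝ))).tendsto.comp key
    simpa [Function.comp_def] using this
  refine hexp.congr' ?_
  filter_upwards [eventually_ge_atTop 1] with n hn
  have hn0 : (1:ℝ) ≤ n := by exact_mod_cast hn
  have hnpos : (0:ℝ) < n := by linarith
  have hP : 0 < Real.log ((n:ℝ) + 1) := Real.log_pos (by linarith)
  have hKpos : 0 < K n := by rw [hK n]; exact K_pos n hn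
  have hfpos : (0:ℝ) < n.factorial := by exact_mod_cast n.factorial_pos
  -- rewrite the root of m n
  have hmrw : m n ^ ((1 : ℝ) / (2 * n))
      = (n.factorial : ℝ) ^ ((1:ℝ) / n) * K n ^ ((1:ℝ) / n) := by
    rw [hm n, Real.mul_rpow (by positivity) (by positivity)]
    congr 1
    · rw [← Real.rpow_natCast ((n.factorial : ℝ)) 2, ← Real.rpow_mul hfpos.le]
      congr 1
      push_cast
      field_simp
    · rw [← Real.rpow_natCast (K n) 2, ← Real.rpow_mul hKpos.le]
      congr 1
      push_cast
      field_simp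
  have hfr : (n.factorial : ℝ) ^ ((1:ℝ) / n) = Real.exp (Real.log n.factorial / n) := by
    rw [Real.rpow_def_of_pos hfpos]
    congr 1
    ring
  have hKr : K n ^ ((1:ℝ) / n)
      = Real.exp (Real.log (∫ x in Set.Ioi (0:ℝ),
          (Real.log (1 + x)) ^ n * Real.exp (-x)) / n) := by
    rw [Real.rpow_def_of_pos hKpos, hK n]
    congr 1
    ring
  have hFpos : 0 < Real.exp 1 * m n ^ ((1 : ℝ) / (2 * ↑n)) / (↑n * Real.log (↑n + 1)) := by
    rw [hmrw]
    positivity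
  rw [← Real.exp_log hFpos]
  congr 1
  rw [Real.log_div (by rw [hmrw]; positivity) (by positivity),
    Real.log_mul (Real.exp_pos 1).ne' (by rw [hmrw]; positivity),
    Real.log_mul hnpos.ne' hP.ne', hmrw,
    Real.log_mul (by positivity) (by positivity),
    Real.log_rpow hfpos, Real.log_rpow hKpos, Real.log_exp, hK n]
  ring
end

section
/- Define m_n := (n!)^2 K_n^2 for n ≥ 1, where K_n := ∫_0^∞ (ln(1+x))^n e^{-x} dx. Then m_{n+1}/m_n = (n+1)^2 (ln(n+1))^2 (1 + o(1)) as n → ∞; that is, the quotient m_{n+1} / (m_n · (n+1)^2 · (ln(n+1))^2) tends to 1 as n → ∞. -/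
set_option maxHeartbeats 1000000


open MeasureTheory Filter Topology Real Set


noncomputable def gg (n : ℕ) (x : ℝ) : ℝ := (Real.log (1+x))^n * Real.exp (-x)

lemma gg_nonneg (n : ℕ) {x : ℝ} (hx : 0 ≤ x) : 0 ≤ gg n x :=
  mul_nonneg (pow_nonneg (Real.log_nonneg (by linarith)) _) (Real.exp_nonneg _)

lemma gg_meas (n : ℕ) : Measurable (gg n) := by
  unfold gg; exact ((Real.measurable_log.comp (measurable_const.add measurable_id)).pow_const n).mul (Real.measurable_exp.comp measurable_id.neg)

lemma integrable_gg (n : ℕ) : IntegrableOn (gg n) (Ioi 0) := by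
  have h := Real.GammaIntegral_convergent (s := (n+1:ℝ)) (by positivity)
  refine Integrable.mono h ((gg_meas n).aestronglyMeasurable) ?_
  filter_upwards [ae_restrict_mem measurableSet_Ioi] with x hx
  have hx0 : (0:ℝ) < x := hx
  rw [Real.norm_eq_abs, abs_of_nonneg (gg_nonneg n hx0.le), Real.norm_eq_abs]
  have h1 : Real.log (1+x) ≤ x := by
    have := Real.log_le_sub_one_of_pos (by linarith : (0:ℝ) < 1+x)
    linarith
  have h2 : gg n x ≤ x^n * Real.exp (-x) :=
    mul_le_mul_of_nonneg_right (pow_le_pow_left₀ (Real.log_nonneg (by linarith)) h1 n)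
      (Real.exp_nonneg _)
  have h3 : Real.exp (-x) * x ^ ((n+1:ℝ)-1) = x^n * Real.exp (-x) := by
    rw [add_sub_cancel_right, Real.rpow_natCast]; ring
  rw [h3, abs_of_nonneg (by positivity)]
  exact h2




lemma integrable_exp_neg : IntegrableOn (fun x : ℝ => Real.exp (-x)) (Ioi 0) := by
  have := exp_neg_integrableOn_Ioi (0:ℝ) (one_pos)
  simpa using this

noncomputable def KK (n : ℕ) : ℝ := ∫ x in Ioi (0:ℝ), gg n x

lemma K_ge (n : ℕ) {c : ℝ} (hc : 0 ≤ c) :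
    Real.log (1+c)^n * Real.exp (-(c+1)) ≤ KK n := by
  unfold KK
  have hsub : Ioc c (c+1) ⊆ Ioi (0:ℝ) := fun x hx => lt_of_le_of_lt hc hx.1
  have h1 : ∫ x in Ioc c (c+1), (Real.log (1+c)^n * Real.exp (-(c+1)))
      ≤ ∫ x in Ioc c (c+1), gg n x := by
    refine setIntegral_mono_on (integrableOn_const measure_Ioc_lt_top.ne)
      ((integrable_gg n).mono_set hsub) measurableSet_Ioc ?_
    intro x hx
    have hx1 : c < x := hx.1
    have hx2 : x ≤ c + 1 := hx.2
    unfold gg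
    refine mul_le_mul (pow_le_pow_left₀ (Real.log_nonneg (by linarith)) ?_ n)
      (Real.exp_le_exp.2 (by linarith)) (Real.exp_nonneg _)
      (pow_nonneg (Real.log_nonneg (by linarith)) _)
    exact Real.log_le_log (by linarith) (by linarith)
  have h2 : ∫ x in Ioc c (c+1), (Real.log (1+c)^n * Real.exp (-(c+1)))
      = Real.log (1+c)^n * Real.exp (-(c+1)) := by
    rw [setIntegral_const, Real.volume_real_Ioc]
    simp
  have h3 : ∫ x in Ioc c (c+1), gg n x ≤ ∫ x in Ioi (0:ℝ), gg n x := by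
    refine setIntegral_mono_set (integrable_gg n) ?_ (HasSubset.Subset.eventuallyLE hsub)
    filter_upwards [ae_restrict_mem measurableSet_Ioi] with x hx
    exact gg_nonneg n (le_of_lt hx)
  linarith [h1, h2.symm.le]

lemma head_le (n : ℕ) {B : ℝ} (hB : 0 ≤ B) :
    ∫ x in Ioc (0:ℝ) B, gg n x ≤ Real.log (1+B)^n := by
  have h1 : ∫ x in Ioc (0:ℝ) B, gg n x ≤ ∫ x in Ioc (0:ℝ) B, Real.log (1+B)^n * Real.exp (-x) := by
    refine setIntegral_mono_on ((integrable_gg n).mono_set Ioc_subset_Ioi_self)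
      ((integrable_exp_neg.mono_set Ioc_subset_Ioi_self).const_mul _) measurableSet_Ioc ?_
    intro x hx
    unfold gg
    refine mul_le_mul_of_nonneg_right (pow_le_pow_left₀ (Real.log_nonneg (by linarith [hx.1])) ?_ n)
      (Real.exp_nonneg _)
    exact Real.log_le_log (by linarith [hx.1]) (by linarith [hx.2])
  have h2 : ∫ x in Ioc (0:ℝ) B, Real.log (1+B)^n * Real.exp (-x)
      = Real.log (1+B)^n * ∫ x in Ioc (0:ℝ) B, Real.exp (-x) := integral_const_mul _ _
  have h3 : ∫ x in Ioc (0:ℝ) B, Real.exp (-x) ≤ ∫ x in Ioi (0:ℝ), Real.exp (-x) := by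
    refine setIntegral_mono_set integrable_exp_neg ?_
      (HasSubset.Subset.eventuallyLE Ioc_subset_Ioi_self)
    exact Eventually.of_forall (fun x => Real.exp_nonneg _)
  rw [integral_exp_neg_Ioi_zero] at h3
  have h4 : (0:ℝ) ≤ Real.log (1+B)^n := pow_nonneg (Real.log_nonneg (by linarith)) _
  calc ∫ x in Ioc (0:ℝ) B, gg n x ≤ Real.log (1+B)^n * ∫ x in Ioc (0:ℝ) B, Real.exp (-x) := by
        rw [← h2]; exact h1
    _ ≤ Real.log (1+B)^n * 1 := mul_le_mul_of_nonneg_left h3 h4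
    _ = _ := mul_one _

lemma split_gg (n : ℕ) {A : ℝ} (hA : 0 < A) :
    ∫ x in Ioi (0:ℝ), gg n x = (∫ x in Ioc (0:ℝ) A, gg n x) + ∫ x in Ioi A, gg n x := by
  rw [← Ioc_union_Ioi_eq_Ioi hA.le]
  exact setIntegral_union (Ioc_disjoint_Ioi le_rfl) measurableSet_Ioi
    ((integrable_gg n).mono_set Ioc_subset_Ioi_self)
    ((integrable_gg n).mono_set (Ioi_subset_Ioi hA.le))


lemma gg_succ (n : ℕ) (x : ℝ) : gg (n+1) x = Real.log (1+x) * gg n x := by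
  unfold gg; rw [pow_succ]; ring

lemma mid_le (n : ℕ) {A : ℝ} (hA : 0 < A) :
    ∫ x in Ioc (0:ℝ) A, gg (n+1) x ≤ Real.log (1+A) * ∫ x in Ioi (0:ℝ), gg n x := by
  have h1 : ∫ x in Ioc (0:ℝ) A, gg (n+1) x ≤ ∫ x in Ioc (0:ℝ) A, Real.log (1+A) * gg n x := by
    refine setIntegral_mono_on ((integrable_gg (n+1)).mono_set Ioc_subset_Ioi_self)
      (((integrable_gg n).mono_set Ioc_subset_Ioi_self).const_mul _) measurableSet_Ioc ?_
    intro x hx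
    rw [gg_succ]
    exact mul_le_mul_of_nonneg_right
      (Real.log_le_log (by linarith [hx.1]) (by linarith [hx.2])) (gg_nonneg n hx.1.le)
  have h2 : ∫ x in Ioc (0:ℝ) A, Real.log (1+A) * gg n x
      = Real.log (1+A) * ∫ x in Ioc (0:ℝ) A, gg n x := integral_const_mul _ _
  have h3 : ∫ x in Ioc (0:ℝ) A, gg n x ≤ ∫ x in Ioi (0:ℝ), gg n x := by
    refine setIntegral_mono_set (integrable_gg n) ?_
      (HasSubset.Subset.eventuallyLE Ioc_subset_Ioi_self)
    filter_upwards [ae_restrict_mem measurableSet_Ioi] with x hx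
    exact gg_nonneg n (le_of_lt hx)
  calc ∫ x in Ioc (0:ℝ) A, gg (n+1) x ≤ Real.log (1+A) * ∫ x in Ioc (0:ℝ) A, gg n x := by
        rw [← h2]; exact h1
    _ ≤ _ := mul_le_mul_of_nonneg_left h3 (Real.log_nonneg (by linarith))

lemma low_ge (n : ℕ) {B : ℝ} (hB : 0 < B) :
    Real.log (1+B) * ∫ x in Ioi B, gg n x ≤ ∫ x in Ioi B, gg (n+1) x := by
  have h1 : ∫ x in Ioi B, Real.log (1+B) * gg n x ≤ ∫ x in Ioi B, gg (n+1) x := by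
    refine setIntegral_mono_on
      (((integrable_gg n).mono_set (Ioi_subset_Ioi hB.le)).const_mul _)
      ((integrable_gg (n+1)).mono_set (Ioi_subset_Ioi hB.le)) measurableSet_Ioi ?_
    intro x hx
    rw [gg_succ]
    exact mul_le_mul_of_nonneg_right
      (Real.log_le_log (by linarith) (by linarith [mem_Ioi.1 hx]))
      (gg_nonneg n (le_of_lt (lt_trans hB (mem_Ioi.1 hx))))
  rw [← integral_const_mul]
  exact h1

lemma tail_le (n : ℕ) {A : ℝ} (hA : 1 ≤ A)
    (h : ∀ x : ℝ, A ≤ x → (n : ℝ) * Real.log x ≤ x/2) :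
    ∫ x in Ioi A, gg n x ≤ 2 * Real.exp (-(A/2)) := by
  have hA0 : (0:ℝ) < A := by linarith
  have h1 : ∫ x in Ioi A, gg n x ≤ ∫ x in Ioi A, Real.exp (-(1/2 * x)) := by
    refine setIntegral_mono_on ((integrable_gg n).mono_set (Ioi_subset_Ioi hA0.le))
      ?_ measurableSet_Ioi ?_
    · have := exp_neg_integrableOn_Ioi A (by norm_num : (0:ℝ) < 1/2)
      refine this.congr_fun (fun x _ => by ring_nf) measurableSet_Ioi
    · intro x hx
      have hx1 : A < x := mem_Ioi.1 hx
      have hx0 : (0:ℝ) < x := lt_of_lt_of_le hA0 hx1.le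
      have hlog : Real.log (1+x) ≤ x := by
        have := Real.log_le_sub_one_of_pos (by linarith : (0:ℝ) < 1+x); linarith
      have h2 : gg n x ≤ x^n * Real.exp (-x) :=
        mul_le_mul_of_nonneg_right
          (pow_le_pow_left₀ (Real.log_nonneg (by linarith)) hlog n) (Real.exp_nonneg _)
      have h3 : x^n ≤ Real.exp (x/2) := by
        have hxn : x^n = Real.exp ((n : ℝ) * Real.log x) := by
          rw [Real.exp_nat_mul, Real.exp_log hx0]
        rw [hxn]
        exact Real.exp_le_exp.2 (h x hx1.le)
      calc gg n x ≤ x^n * Real.exp (-x) := h2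
        _ ≤ Real.exp (x/2) * Real.exp (-x) :=
            mul_le_mul_of_nonneg_right h3 (Real.exp_nonneg _)
        _ = Real.exp (-(1/2 * x)) := by rw [← Real.exp_add]; ring_nf
  have h2 : ∫ x in Ioi A, Real.exp (-(1/2 * x)) = 2 * Real.exp (-(A/2)) := by
    have := integral_comp_mul_left_Ioi (fun y => Real.exp (-y)) A (by norm_num : (0:ℝ) < 1/2)
    simp only [smul_eq_mul] at this
    rw [this, integral_exp_neg_Ioi]
    norm_num
    ring_nf
  rw [← h2]; exact h1

section Limits

noncomputable def LL (n : ℕ) : ℝ := Real.log ((n:ℝ)+2)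

lemma t_log1 : Tendsto (fun n : ℕ => Real.log ((n:ℝ)+1)) atTop atTop :=
  tendsto_log_atTop.comp (tendsto_atTop_add_const_right _ 1 tendsto_natCast_atTop_atTop)

lemma t_L : Tendsto LL atTop atTop :=
  tendsto_log_atTop.comp (tendsto_atTop_add_const_right _ 2 tendsto_natCast_atTop_atTop)

lemma t_inv_log1 : Tendsto (fun n : ℕ => 1/Real.log ((n:ℝ)+1)) atTop (𝓝 0) := by
  exact t_log1.inv_tendsto_atTop.congr (fun n => by simp [Pi.inv_apply, one_div])

lemma t_logdiv : Tendsto (fun x : ℝ => Real.log x / x) atTop (𝓝 0) := by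
  have := Real.isLittleO_log_id_atTop.tendsto_div_nhds_zero
  simpa using this

lemma t_loglogL : Tendsto (fun n : ℕ => Real.log (LL n) / LL n) atTop (𝓝 0) :=
  t_logdiv.comp t_L

lemma t_loglog : Tendsto (fun n : ℕ => Real.log (LL n) / Real.log ((n:ℝ)+1)) atTop (𝓝 0) := by
  have hub : Tendsto (fun n : ℕ => 2 * (Real.log (LL n) / LL n)) atTop (𝓝 0) := by
    simpa using t_loglogL.const_mul 2
  refine tendsto_of_tendsto_of_tendsto_of_le_of_le' tendsto_const_nhds hub ?_ ?_
  · filter_upwards [t_L.eventually_ge_atTop 1, t_log1.eventually_ge_atTop 1] with n h1 h2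
    exact div_nonneg (Real.log_nonneg h1) (by linarith)
  · filter_upwards [t_L.eventually_ge_atTop 1, eventually_ge_atTop 1] with n h1 hn
    have hn1 : (1:ℝ) ≤ (n:ℝ) := by exact_mod_cast hn
    have key : LL n ≤ 2 * Real.log ((n:ℝ)+1) := by
      have h2 : ((n:ℝ)+2) ≤ ((n:ℝ)+1)^2 := by nlinarith
      have := Real.log_le_log (by linarith) h2
      rw [Real.log_pow] at this
      unfold LL
      push_cast at this ⊢
      linarith
    have hlogpos : (0:ℝ) < Real.log ((n:ℝ)+1) := by nlinarith
    have h0 : (0:ℝ) ≤ Real.log (LL n) := Real.log_nonneg h1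
    calc Real.log (LL n) / Real.log ((n:ℝ)+1) ≤ Real.log (LL n) / (LL n / 2) := by
          refine div_le_div_of_nonneg_left h0 (by linarith) (by linarith)
      _ = 2 * (Real.log (LL n) / LL n) := by
          rw [div_div_eq_mul_div]; ring


noncomputable def AA (n : ℕ) : ℝ := ((n:ℝ)+1) * LL n^2

lemma t_A : Tendsto AA atTop atTop := by
  refine tendsto_atTop_mono' atTop ?_ tendsto_natCast_atTop_atTop
  filter_upwards [t_L.eventually_ge_atTop 1] with n h1
  have : (0:ℝ) ≤ (n:ℝ) := Nat.cast_nonneg n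
  unfold AA; nlinarith [(one_le_pow₀ h1 : (1:ℝ) ≤ LL n^2)]

lemma t_expA : Tendsto (fun n : ℕ => Real.exp (-(AA n/2))) atTop (𝓝 0) := by
  have h2 : Tendsto (fun n : ℕ => AA n / 2) atTop atTop :=
    t_A.atTop_div_const (by norm_num)
  exact Real.tendsto_exp_neg_atTop_nhds_zero.comp h2

lemma t_xdivlog : Tendsto (fun x : ℝ => x / Real.log x) atTop atTop := by
  have h1 : Tendsto (fun x : ℝ => Real.log x / x) atTop (𝓝[>] 0) := by
    refine tendsto_nhdsWithin_of_tendsto_nhds_of_eventually_within _ t_logdiv ?_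
    filter_upwards [eventually_gt_atTop (1:ℝ)] with x hx
    exact div_pos (Real.log_pos hx) (by linarith)
  refine h1.inv_tendsto_nhdsGT_zero.congr (fun x => ?_)
  simp [Pi.inv_apply, inv_div]

lemma t_nL : Tendsto (fun n : ℕ => (n:ℝ) / LL n) atTop atTop := by
  have h1 : Tendsto (fun n : ℕ => ((n:ℝ)+2) / LL n) atTop atTop :=
    t_xdivlog.comp (tendsto_atTop_add_const_right _ 2 tendsto_natCast_atTop_atTop)
  have h2 : Tendsto (fun n : ℕ => ((n:ℝ)+2) / LL n - 2) atTop atTop :=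
    tendsto_atTop_add_const_right _ (-2) h1
  refine tendsto_atTop_mono' atTop ?_ h2
  filter_upwards [t_L.eventually_ge_atTop 1] with n h1'
  have hL0 : (0:ℝ) < LL n := by linarith
  have : ((n:ℝ)+2)/LL n - (n:ℝ)/LL n = 2/LL n := by rw [div_sub_div_same]; norm_num
  have h3 : 2/LL n ≤ 2 := by
    rw [div_le_iff₀ hL0]; linarith
  linarith

lemma t_expE : Tendsto (fun n : ℕ => Real.exp (1 - 2*(n:ℝ)/LL n)) atTop (𝓝 0) := by
  have h1 : Tendsto (fun n : ℕ => 2*((n:ℝ)/LL n) - 1) atTop atTop :=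
    tendsto_atTop_add_const_right _ (-1) (t_nL.const_mul_atTop (by norm_num))
  have := Real.tendsto_exp_neg_atTop_nhds_zero.comp h1
  refine this.congr (fun n => ?_)
  simp only [Function.comp_def]
  congr 1
  ring


lemma K_pos_ge (n : ℕ) : Real.exp (-3) ≤ KK n := by
  have h := K_ge n (by norm_num : (0:ℝ) ≤ 2)
  have h3 : (1:ℝ) ≤ Real.log (1+2) := by
    rw [(by norm_num : (1:ℝ)+2 = 3)]
    have := Real.exp_one_lt_d9
    have : Real.exp 1 < 3 := by linarith
    linarith [(Real.lt_log_iff_exp_lt (by norm_num : (0:ℝ) < 3)).2 this]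
  have h4 : (1:ℝ) ≤ Real.log (1+2)^n := one_le_pow₀ h3
  have h5 : (-(2+1:ℝ)) = -3 := by norm_num
  rw [h5] at h
  nlinarith [Real.exp_pos (-3:ℝ), h]

lemma upper_est (n : ℕ) (hL : 12 ≤ Real.log ((n:ℝ)+2)) :
    KK (n+1) ≤ Real.log (1 + ((n:ℝ)+1)*Real.log ((n:ℝ)+2)^2) * KK n
        + 2 * Real.exp (-((((n:ℝ)+1)*Real.log ((n:ℝ)+2)^2)/2)) := by
  unfold KK
  set L := Real.log ((n:ℝ)+2) with hLdef
  set A := ((n:ℝ)+1)*L^2 with hAdef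
  have hn1 : (1:ℝ) ≤ (n:ℝ)+1 := by linarith [Nat.cast_nonneg (α := ℝ) n]
  have hA1 : (1:ℝ) ≤ A := by nlinarith
  have hA0 : (0:ℝ) < A := by linarith
  have htail : ∀ x : ℝ, A ≤ x → ((n+1 : ℕ) : ℝ) * Real.log x ≤ x/2 := by
    intro x hx
    push_cast
    have hx0 : (0:ℝ) < x := lt_of_lt_of_le hA0 hx
    have hlogx : Real.log x ≤ Real.log A + x/A := by
      have e1 : Real.log (x/A) = Real.log x - Real.log A := Real.log_div hx0.ne' hA0.ne'
      have e2 : Real.log (x/A) ≤ x/A - 1 := Real.log_le_sub_one_of_pos (by positivity)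
      linarith
    have hL0 : (0:ℝ) < L := by linarith
    have e1 : Real.log A = Real.log ((n:ℝ)+1) + 2*Real.log L := by
      rw [hAdef, Real.log_mul (by positivity) (by positivity), Real.log_pow]
      push_cast; ring
    have e2 : Real.log ((n:ℝ)+1) ≤ L := Real.log_le_log (by linarith) (by linarith)
    have e3 : Real.log L ≤ L := by
      have := Real.log_le_sub_one_of_pos hL0; linarith
    have hlogA : Real.log A ≤ 3*L := by rw [e1]; linarith
    have k1 : ((n:ℝ)+1) * (x/A) = x/L^2 := by
      rw [hAdef]; field_simp
    have k2 : 3*(((n:ℝ)+1)*L) ≤ x/4 := by nlinarith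
    have k3 : x/L^2 ≤ x/4 := by
      rw [div_le_div_iff₀ (by positivity) (by norm_num)]; nlinarith [sq_nonneg L, hx0.le, mul_le_mul_of_nonneg_left (show (4:ℝ) ≤ L^2 by nlinarith) hx0.le]
    have k4 : ((n:ℝ)+1) * Real.log x ≤ ((n:ℝ)+1) * (Real.log A + x/A) :=
      mul_le_mul_of_nonneg_left hlogx (by linarith)
    have k5 : ((n:ℝ)+1) * Real.log A ≤ ((n:ℝ)+1) * (3*L) :=
      mul_le_mul_of_nonneg_left hlogA (by linarith)
    nlinarith [k4, k5, k1, k2, k3]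
  have hsplit := split_gg (n+1) hA0
  have hmid := mid_le n hA0
  have htl := tail_le (n+1) hA1 htail
  linarith

lemma lower_est (n : ℕ) (hL : 1 ≤ Real.log ((n:ℝ)+2)) :
    Real.log (1 + ((n:ℝ)+1)/Real.log ((n:ℝ)+2)^4)
        * (KK n - Real.log (1 + ((n:ℝ)+1)/Real.log ((n:ℝ)+2)^4)^n)
      ≤ KK (n+1) := by
  unfold KK
  set L := Real.log ((n:ℝ)+2) with hLdef
  set B := ((n:ℝ)+1)/L^4 with hBdef
  have hB0 : (0:ℝ) < B := by positivity
  have hlogB : (0:ℝ) ≤ Real.log (1+B) := Real.log_nonneg (by linarith)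
  have h1 : ∫ x in Ioi B, gg (n+1) x ≤ ∫ x in Ioi (0:ℝ), gg (n+1) x := by
    refine setIntegral_mono_set (integrable_gg (n+1)) ?_
      (HasSubset.Subset.eventuallyLE (Ioi_subset_Ioi hB0.le))
    filter_upwards [ae_restrict_mem measurableSet_Ioi] with x hx
    exact gg_nonneg (n+1) (le_of_lt hx)
  have h2 := low_ge n hB0
  have h3 := split_gg n hB0
  have h4 := head_le n hB0.le
  nlinarith [h1, h2, h3, h4, hlogB]



noncomputable def Up (n : ℕ) : ℝ :=
  1 + Real.log 2 / Real.log ((n:ℝ)+1) + 2*(Real.log (LL n)/Real.log ((n:ℝ)+1))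
    + 2*Real.exp 3 * Real.exp (-(AA n/2))

noncomputable def Low (n : ℕ) : ℝ :=
  (1 - 4*(Real.log (LL n)/Real.log ((n:ℝ)+1))) * (1 - Real.exp (1 - 2*(n:ℝ)/LL n))

lemma t_Up : Tendsto Up atTop (𝓝 1) := by
  have h1 : Tendsto (fun n : ℕ => Real.log 2 / Real.log ((n:ℝ)+1)) atTop (𝓝 0) := by
    have := t_inv_log1.const_mul (Real.log 2)
    simpa [mul_one_div, div_eq_mul_inv] using this
  have h2 := t_loglog.const_mul (2:ℝ)
  have h3 := t_expA.const_mul (2*Real.exp 3)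
  have := ((tendsto_const_nhds (x := (1:ℝ)) (f := atTop)).add h1).add h2 |>.add h3
  show Tendsto (fun n : ℕ => 1 + Real.log 2 / Real.log ((n:ℝ)+1) + 2*(Real.log (LL n)/Real.log ((n:ℝ)+1))
    + 2*Real.exp 3 * Real.exp (-(AA n/2))) atTop (𝓝 1)
  simpa using this

lemma t_Low : Tendsto Low atTop (𝓝 1) := by
  have h1 := (tendsto_const_nhds (x := (1:ℝ)) (f := atTop)).sub (t_loglog.const_mul (4:ℝ))
  have h2 := (tendsto_const_nhds (x := (1:ℝ)) (f := atTop)).sub t_expE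
  have := h1.mul h2
  show Tendsto (fun n : ℕ => (1 - 4*(Real.log (LL n)/Real.log ((n:ℝ)+1))) * (1 - Real.exp (1 - 2*(n:ℝ)/LL n))) atTop (𝓝 1)
  simpa using this

lemma ev_L4 : ∀ᶠ n : ℕ in atTop, LL n^4 ≤ (n:ℝ)+1 := by
  have h0 : Tendsto (fun n : ℕ => LL n^4 / ((n:ℝ)+2)) atTop (𝓝 0) := by
    have h1 := Real.tendsto_pow_log_div_mul_add_atTop 1 0 4 one_ne_zero
    have h2 := h1.comp (tendsto_atTop_add_const_right atTop (2:ℝ) tendsto_natCast_atTop_atTop)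
    refine h2.congr (fun n => ?_)
    simp [Function.comp_def, LL]
  filter_upwards [h0.eventually_le_const (by norm_num : (0:ℝ) < 1/2)] with n hn
  have hpos : (0:ℝ) < (n:ℝ)+2 := by positivity
  rw [div_le_iff₀ hpos] at hn
  have : (0:ℝ) ≤ (n:ℝ) := Nat.cast_nonneg n
  linarith

lemma ev_upper : ∀ᶠ n : ℕ in atTop,
    KK (n+1)/(KK n * Real.log ((n:ℝ)+1)) ≤ Up n := by
  filter_upwards [t_L.eventually_ge_atTop 12, t_log1.eventually_ge_atTop 1] with n hL hlog1
  have hL' : (12:ℝ) ≤ Real.log ((n:ℝ)+2) := hL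
  have hKpos : (0:ℝ) < KK n := lt_of_lt_of_le (Real.exp_pos _) (K_pos_ge n)
  have hKe := K_pos_ge n
  have hlogpos : (0:ℝ) < Real.log ((n:ℝ)+1) := by linarith
  have hub := upper_est n hL'
  set L := Real.log ((n:ℝ)+2) with hLdef
  set A := ((n:ℝ)+1)*L^2 with hAdef
  have hAAeq : AA n = A := rfl
  have hLLeq : LL n = L := rfl
  clear_value L A
  have hL0 : (0:ℝ) < L := by linarith
  have hn0 : (0:ℝ) ≤ (n:ℝ) := Nat.cast_nonneg n
  have hA0 : (0:ℝ) < A := by rw [hAdef]; positivity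
  have hAbound : Real.log (1+A) ≤ Real.log 2 + Real.log ((n:ℝ)+1) + 2*Real.log L := by
    have hL2 : (1:ℝ) ≤ L^2 := one_le_pow₀ (by linarith)
    have h1 : 1+A ≤ 2*(((n:ℝ)+1)*L^2) := by rw [hAdef]; nlinarith
    have h2 : Real.log (1+A) ≤ Real.log (2*(((n:ℝ)+1)*L^2)) :=
      Real.log_le_log (by linarith) h1
    rw [Real.log_mul (by norm_num) (by positivity),
      Real.log_mul (by positivity) (pow_ne_zero 2 hL0.ne'), Real.log_pow] at h2
    push_cast at h2
    linarith
  have hdenpos : (0:ℝ) < KK n * Real.log ((n:ℝ)+1) := mul_pos hKpos hlogpos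
  have e0 : KK (n+1)/(KK n * Real.log ((n:ℝ)+1))
      ≤ (Real.log (1+A) * KK n + 2*Real.exp (-(A/2)))/(KK n * Real.log ((n:ℝ)+1)) := by
    exact (div_le_div_iff_of_pos_right hdenpos).2 hub
  have e1 : (Real.log (1+A) * KK n + 2*Real.exp (-(A/2)))/(KK n * Real.log ((n:ℝ)+1))
      = Real.log (1+A)/Real.log ((n:ℝ)+1)
        + (2*Real.exp (-(A/2)))/(KK n * Real.log ((n:ℝ)+1)) := by
    rw [add_div]
    congr 1
    rw [mul_comm (KK n) (Real.log ((n:ℝ)+1)), mul_div_mul_right _ _ hKpos.ne']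
  have t1 : Real.log (1+A)/Real.log ((n:ℝ)+1)
      ≤ 1 + Real.log 2/Real.log ((n:ℝ)+1) + 2*(Real.log L/Real.log ((n:ℝ)+1)) := by
    rw [div_le_iff₀ hlogpos]
    have expand : (1 + Real.log 2/Real.log ((n:ℝ)+1) + 2*(Real.log L/Real.log ((n:ℝ)+1)))
        * Real.log ((n:ℝ)+1)
        = Real.log ((n:ℝ)+1) + Real.log 2 + 2*Real.log L := by
      field_simp
    rw [expand]
    linarith
  have p1 : (1:ℝ) ≤ Real.exp 3 * KK n := by
    have h1 : Real.exp 3 * Real.exp (-3) ≤ Real.exp 3 * KK n :=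
      mul_le_mul_of_nonneg_left hKe (Real.exp_nonneg _)
    rwa [← Real.exp_add, (by norm_num : (3:ℝ) + -3 = 0), Real.exp_zero] at h1
  have p2 : (1:ℝ) ≤ Real.exp 3 * KK n * Real.log ((n:ℝ)+1) := by
    nlinarith
  have t2 : (2*Real.exp (-(A/2)))/(KK n * Real.log ((n:ℝ)+1))
      ≤ 2*Real.exp 3 * Real.exp (-(A/2)) := by
    rw [div_le_iff₀ hdenpos]
    have := mul_le_mul_of_nonneg_left p2 (show (0:ℝ) ≤ 2*Real.exp (-(A/2)) by positivity)
    nlinarith [Real.exp_pos (-(A/2))]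
  unfold Up
  rw [hAAeq, hLLeq]
  calc KK (n+1)/(KK n * Real.log ((n:ℝ)+1))
      ≤ Real.log (1+A)/Real.log ((n:ℝ)+1)
        + (2*Real.exp (-(A/2)))/(KK n * Real.log ((n:ℝ)+1)) := by rw [← e1]; exact e0
    _ ≤ _ := by linarith

lemma ev_lower : ∀ᶠ n : ℕ in atTop,
    Low n ≤ KK (n+1)/(KK n * Real.log ((n:ℝ)+1)) := by
  filter_upwards [t_L.eventually_ge_atTop 12, ev_L4,
    t_loglog.eventually_le_const (by norm_num : (0:ℝ) < 1/8),
    t_log1.eventually_ge_atTop 1,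
    t_expE.eventually_le_const (by norm_num : (0:ℝ) < 1),
    eventually_ge_atTop 1] with n hL hL4 hll hlog1 hE1 hn1
  have hL' : (12:ℝ) ≤ Real.log ((n:ℝ)+2) := hL
  set L := Real.log ((n:ℝ)+2) with hLdef
  have hLLeq : LL n = L := rfl
  rw [hLLeq] at hL hL4 hll hE1
  clear_value L
  have hL0 : (0:ℝ) < L := by linarith
  have hn0 : (1:ℝ) ≤ (n:ℝ) := by exact_mod_cast hn1
  have hlogpos : (0:ℝ) < Real.log ((n:ℝ)+1) := by linarith
  have hKpos : (0:ℝ) < KK n := lt_of_lt_of_le (Real.exp_pos _) (K_pos_ge n)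
  set B := ((n:ℝ)+1)/L^4 with hBdef
  set c := ((n:ℝ)+1)/L with hcdef
  have hB0 : (0:ℝ) < B := by positivity
  have hB1 : (1:ℝ) ≤ B := by
    rw [hBdef, le_div_iff₀ (by positivity)]
    simpa using hL4
  have hc0 : (0:ℝ) < c := by positivity
  clear_value B c
  set a := Real.log (1+B) with hadef
  set b := Real.log (1+c) with hbdef
  clear_value a b
  have ha0 : (0:ℝ) < a := by rw [hadef]; exact Real.log_pos (by linarith)
  have hb0 : (0:ℝ) < b := by rw [hbdef]; exact Real.log_pos (by linarith)
  have hlow : a * (KK n - a^n) ≤ KK (n+1) := by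
    have := lower_est n (by rw [← hLdef]; linarith)
    rw [← hLdef, ← hBdef, ← hadef] at this
    exact this
  have hKb : b^n * Real.exp (-(c+1)) ≤ KK n := by
    have := K_ge n hc0.le
    rw [← hbdef] at this
    exact this
  -- b ≤ L
  have hcn : c ≤ (n:ℝ)+1 := by
    rw [hcdef, div_le_iff₀ hL0]; nlinarith
  have hbL : b ≤ L := by
    rw [hbdef, hLdef]
    exact Real.log_le_log (by linarith) (by linarith)

  -- lower bound for b
  have hblow : Real.log ((n:ℝ)+1) - Real.log L ≤ b := by
    have h1 : Real.log c ≤ b := by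
      rw [hbdef]; exact Real.log_le_log hc0 (by linarith)
    rw [hcdef, Real.log_div (by positivity) hL0.ne'] at h1
    linarith
  -- upper bound for a
  have haup : a ≤ Real.log 2 + Real.log ((n:ℝ)+1) - 4*Real.log L := by
    have h1 : 1+B ≤ 2*B := by linarith
    have h2 : a ≤ Real.log (2*B) := by
      rw [hadef]; exact Real.log_le_log (by linarith) h1
    rw [hBdef, Real.log_mul (by norm_num) (by positivity),
      Real.log_div (by positivity) (by positivity), Real.log_pow] at h2
    push_cast at h2
    linarith
  -- log L ≥ 2
  have hlogL2 : (2:ℝ) ≤ Real.log L := by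
    rw [Real.le_log_iff_exp_le hL0]
    have h1 : Real.exp 2 = Real.exp 1 * Real.exp 1 := by
      rw [← Real.exp_add]; norm_num
    nlinarith [Real.exp_one_lt_d9, Real.exp_pos (1:ℝ)]
  have hlog2L : Real.log 2 ≤ Real.log L := Real.log_le_log (by norm_num) (by linarith)
  have hba : 2*Real.log L ≤ b - a := by linarith
  -- log (a/b) ≤ -(2 log L)/L
  have hlogab : Real.log (a/b) ≤ -(2*Real.log L)/L := by
    have h1 : Real.log (a/b) ≤ a/b - 1 := Real.log_le_sub_one_of_pos (by positivity)
    have h2 : a/b - 1 = -((b-a)/b) := by field_simp; ring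
    have h3 : (b-a)/L ≤ (b-a)/b := div_le_div_of_nonneg_left (by linarith) hb0 hbL
    have h4 : 2*Real.log L/L ≤ (b-a)/L := (div_le_div_iff_of_pos_right hL0).2 hba
    have h5 : -((b-a)/b) ≤ -((b-a)/L) := neg_le_neg h3
    have h6 : -((b-a)/L) ≤ -(2*Real.log L/L) := neg_le_neg h4
    have h7 : -(2*Real.log L/L) = -(2*Real.log L)/L := by ring
    linarith
  -- exponent estimate
  have hexp : (n:ℝ)*Real.log (a/b) + (c+1) ≤ 1 - 2*(n:ℝ)/L := by
    have m1 : (n:ℝ)*Real.log (a/b) ≤ (n:ℝ)*(-(2*Real.log L)/L) :=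
      mul_le_mul_of_nonneg_left hlogab (by linarith)
    have m2 : (-(2*(n:ℝ)*Real.log L) + ((n:ℝ)+1))/L ≤ -(2*(n:ℝ))/L := by
      refine (div_le_div_iff_of_pos_right hL0).2 ?_
      nlinarith
    have m3 : (n:ℝ)*(-(2*Real.log L)/L) = -(2*(n:ℝ)*Real.log L)/L := by ring
    have m4 : (-(2*(n:ℝ)*Real.log L) + ((n:ℝ)+1))/L
        = -(2*(n:ℝ)*Real.log L)/L + ((n:ℝ)+1)/L := by rw [add_div]
    have m5 : c = ((n:ℝ)+1)/L := hcdef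
    have m6 : -(2*(n:ℝ))/L = -(2*(n:ℝ)/L) := by ring
    linarith
  -- epsilon bound
  have heps : a^n/KK n ≤ Real.exp (1 - 2*(n:ℝ)/L) := by
    have hd0 : (0:ℝ) < b^n * Real.exp (-(c+1)) := by positivity
    have h1 : a^n/KK n ≤ a^n/(b^n * Real.exp (-(c+1))) :=
      div_le_div_of_nonneg_left (by positivity) hd0 hKb
    have h2 : a^n/(b^n * Real.exp (-(c+1)))
        = Real.exp ((n:ℝ)*Real.log (a/b) + (c+1)) := by
      rw [Real.exp_add, Real.exp_nat_mul, Real.exp_log (div_pos ha0 hb0), div_pow,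
        Real.exp_neg]
      field_simp
    have h3 : Real.exp ((n:ℝ)*Real.log (a/b) + (c+1)) ≤ Real.exp (1 - 2*(n:ℝ)/L) :=
      Real.exp_le_exp.2 hexp
    linarith
  -- a / log(n+1) lower bound
  have hand : 1 - 4*(Real.log L/Real.log ((n:ℝ)+1)) ≤ a/Real.log ((n:ℝ)+1) := by
    have h1 : Real.log B ≤ a := by
      rw [hadef]; exact Real.log_le_log hB0 (by linarith)
    have h2 : Real.log B = Real.log ((n:ℝ)+1) - 4*Real.log L := by
      rw [hBdef, Real.log_div (by positivity) (by positivity), Real.log_pow]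
      push_cast; ring
    have h3 : (Real.log ((n:ℝ)+1) - 4*Real.log L)/Real.log ((n:ℝ)+1)
        ≤ a/Real.log ((n:ℝ)+1) := by
      refine (div_le_div_iff_of_pos_right hlogpos).2 ?_
      linarith
    have h4 : (Real.log ((n:ℝ)+1) - 4*Real.log L)/Real.log ((n:ℝ)+1)
        = 1 - 4*(Real.log L/Real.log ((n:ℝ)+1)) := by
      field_simp
    linarith
  have htz : (0:ℝ) ≤ 1 - 4*(Real.log L/Real.log ((n:ℝ)+1)) := by
    linarith [hll]
  -- final assembly
  have hstep1 : (a * (KK n - a^n))/(KK n * Real.log ((n:ℝ)+1))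
      ≤ KK (n+1)/(KK n * Real.log ((n:ℝ)+1)) :=
    (div_le_div_iff_of_pos_right (mul_pos hKpos hlogpos)).2 hlow
  have hstep2 : (a * (KK n - a^n))/(KK n * Real.log ((n:ℝ)+1))
      = (a/Real.log ((n:ℝ)+1)) * (1 - a^n/KK n) := by
    rw [one_sub_div hKpos.ne', div_mul_div_comm, mul_comm (Real.log ((n:ℝ)+1)) (KK n)]
  have hE1' : Real.exp (1 - 2*(n:ℝ)/L) ≤ 1 := hE1
  have s1 : 1 - Real.exp (1 - 2*(n:ℝ)/L) ≤ 1 - a^n/KK n := by linarith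
  have s2 : (a/Real.log ((n:ℝ)+1)) * (1 - Real.exp (1 - 2*(n:ℝ)/L))
      ≤ (a/Real.log ((n:ℝ)+1)) * (1 - a^n/KK n) :=
    mul_le_mul_of_nonneg_left s1 (by positivity)
  have s3 : (1 - 4*(Real.log L/Real.log ((n:ℝ)+1))) * (1 - Real.exp (1 - 2*(n:ℝ)/L))
      ≤ (a/Real.log ((n:ℝ)+1)) * (1 - Real.exp (1 - 2*(n:ℝ)/L)) :=
    mul_le_mul_of_nonneg_right hand (by linarith)
  unfold Low
  rw [hLLeq]
  linarith
lemma tendsto_rho : Tendsto (fun n : ℕ => KK (n+1)/(KK n * Real.log ((n:ℝ)+1))) atTop (𝓝 1) :=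
  tendsto_of_tendsto_of_tendsto_of_le_of_le' t_Low t_Up ev_lower ev_upper



/-- With `mₙ = (n!)² Kₙ²` and `Kₙ = ∫_0^∞ (ln(1+x))ⁿ e^{-x} dx`, one has
`m_{n+1}/mₙ = (n+1)² (ln(n+1))² (1 + o(1))` as `n → ∞`, i.e. the quotient
`m_{n+1} / (mₙ (n+1)² (ln(n+1))²)` tends to `1`. -/
theorem moment_ratio_asymptotics
    (K : ℕ → ℝ)
    (hK : ∀ n : ℕ, K n = ∫ x in Set.Ioi (0 : ℝ), (Real.log (1 + x)) ^ n * Real.exp (-x))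
    (m : ℕ → ℝ)
    (hm : ∀ n : ℕ, m n = (n.factorial : ℝ) ^ 2 * K n ^ 2) :
    Tendsto
      (fun n : ℕ =>
        m (n + 1) / (m n * (n + 1) ^ 2 * Real.log (n + 1) ^ 2))
      atTop (𝓝 1) := by
  have hKeq : ∀ n, K n = KK n := fun n => hK n
  have hsq : Tendsto (fun n : ℕ => (KK (n+1)/(KK n * Real.log ((n:ℝ)+1)))^2) atTop (𝓝 1) := by
    have := tendsto_rho.pow 2
    simpa using this
  refine hsq.congr' ?_
  filter_upwards [eventually_ge_atTop 1] with n hn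
  have hn1 : (1:ℝ) ≤ (n:ℝ) := by exact_mod_cast hn
  have hKpos : (0:ℝ) < KK n := lt_of_lt_of_le (Real.exp_pos _) (K_pos_ge n)
  have hlogpos : (0:ℝ) < Real.log ((n:ℝ)+1) := Real.log_pos (by linarith)
  have hfac : ((n.factorial : ℝ)) ≠ 0 := by
    exact_mod_cast n.factorial_ne_zero
  have hfs : (((n+1).factorial : ℝ)) = ((n:ℝ)+1) * (n.factorial : ℝ) := by
    rw [Nat.factorial_succ]; push_cast; ring
  rw [hm, hm, hKeq, hKeq, hfs]
  have hn0 : ((n:ℝ)+1) ≠ 0 := by positivity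
  field_simp
end Limits
end

section
/- Let W : [0, ∞) → [0, ∞) be the Lambert W function, i.e., W(t) ≥ 0 and W(t) e^{W(t)} = t for all t ≥ 0, and define S(t) := ∫_0^∞ (ln(1+x))^t e^{-x} dx for t ≥ 0. Then S(t) = e · √(2πt) · W(t)^{t − 1/2} · e^{−t/W(t)} · (1 + o(1)) as t → ∞; that is, the quotient S(t) / (e √(2πt) W(t)^{t−1/2} e^{−t/W(t)}) tends to 1 as t → ∞. -/
set_option maxHeartbeats 1600000
set_option linter.unusedVariables false

open MeasureTheory Filter Topology Real Set



private lemma monoOn_of_hasDerivAt {f f' : ℝ → ℝ} {s : Set ℝ} (hs : Convex ℝ s)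
    (hf : ∀ u ∈ s, HasDerivAt f (f' u) u) (h : ∀ u ∈ s, 0 ≤ f' u) : MonotoneOn f s := by
  apply monotoneOn_of_deriv_nonneg hs
  · exact fun u hu => (hf u hu).continuousAt.continuousWithinAt
  · exact fun u hu => ((hf u (interior_subset hu)).differentiableAt).differentiableWithinAt
  · intro u hu
    rw [(hf u (interior_subset hu)).deriv]
    exact h u (interior_subset hu)

private lemma antiOn_of_hasDerivAt {f f' : ℝ → ℝ} {s : Set ℝ} (hs : Convex ℝ s)
    (hf : ∀ u ∈ s, HasDerivAt f (f' u) u) (h : ∀ u ∈ s, f' u ≤ 0) : AntitoneOn f s := by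
  have := monoOn_of_hasDerivAt (f := fun u => -f u) (f' := fun u => -f' u) hs
    (fun u hu => (hf u hu).neg) (fun u hu => neg_nonneg.2 (h u hu))
  intro a ha b hb hab
  have := this ha hb hab
  simp only [neg_le_neg_iff] at this
  exact this

/-- Quadratic upper Taylor bound from a second-derivative upper bound. -/
private lemma taylor_quad_upper {f f' f'' : ℝ → ℝ} {a b w c : ℝ}
    (haw : a ≤ w) (hwb : w ≤ b)
    (hf : ∀ u ∈ Icc a b, HasDerivAt f (f' u) u)
    (hf' : ∀ u ∈ Icc a b, HasDerivAt f' (f'' u) u)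
    (hc : ∀ u ∈ Icc a b, f'' u ≤ -c) :
    ∀ u ∈ Icc a b, f u ≤ f w + f' w * (u - w) - c * (u - w) ^ 2 / 2 := by
  set g : ℝ → ℝ := fun u => f w + f' w * (u - w) - c * (u - w) ^ 2 / 2 - f u with hg
  set g' : ℝ → ℝ := fun u => f' w - c * (u - w) - f' u with hg'
  have hwmem : w ∈ Icc a b := ⟨haw, hwb⟩
  have hgd : ∀ u ∈ Icc a b, HasDerivAt g (g' u) u := by
    intro u hu
    have h1 : HasDerivAt (fun u : ℝ => f w + f' w * (u - w) - c * (u - w) ^ 2 / 2)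
        (f' w - c * (u - w)) u := by
      have : HasDerivAt (fun u : ℝ => f w + f' w * (u - w) - c * (u - w) ^ 2 / 2)
          (0 + f' w * 1 - c * (2 * (u - w) ^ 1 * 1) / 2) u := by
        exact (((hasDerivAt_const u (f w)).add (((hasDerivAt_id u).sub_const w).const_mul
          (f' w))).sub ((((hasDerivAt_id u).sub_const w).pow 2).const_mul c |>.div_const 2))
      convert this using 1; ring
    exact h1.sub (hf u hu)
  have hg'd : ∀ u ∈ Icc a b, HasDerivAt g' (-c - f'' u) u := by
    intro u hu
    have h1 : HasDerivAt (fun u : ℝ => f' w - c * (u - w)) (-c) u := by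
      have : HasDerivAt (fun u : ℝ => f' w - c * (u - w)) (0 - c * 1) u :=
        (hasDerivAt_const u (f' w)).sub (((hasDerivAt_id u).sub_const w).const_mul c)
      simpa using this
    exact h1.sub (hf' u hu)
  have hg'mono : MonotoneOn g' (Icc a b) :=
    monoOn_of_hasDerivAt (convex_Icc a b) hg'd (fun u hu => by have := hc u hu; linarith)
  have hg'w : g' w = 0 := by simp [hg']
  -- g is antitone on [a,w], monotone on [w,b]
  have hleft : AntitoneOn g (Icc a w) := by
    apply antiOn_of_hasDerivAt (convex_Icc a w)
      (fun u hu => hgd u ⟨hu.1, hu.2.trans hwb⟩)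
    intro u hu
    have : g' u ≤ g' w := hg'mono ⟨hu.1, hu.2.trans hwb⟩ hwmem hu.2
    linarith [hg'w ▸ this]
  have hright : MonotoneOn g (Icc w b) := by
    apply monoOn_of_hasDerivAt (convex_Icc w b)
      (fun u hu => hgd u ⟨haw.trans hu.1, hu.2⟩)
    intro u hu
    have : g' w ≤ g' u := hg'mono hwmem ⟨haw.trans hu.1, hu.2⟩ hu.1
    linarith [hg'w ▸ this]
  intro u hu
  have hgw : g w = 0 := by simp [hg]
  rcases le_total u w with h | h
  · have : g w ≤ g u := hleft ⟨hu.1, h⟩ ⟨haw, le_refl w⟩ h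
    rw [hgw] at this; simp only [hg] at this; linarith
  · have : g w ≤ g u := hright ⟨le_refl w, hwb⟩ ⟨h, hu.2⟩ h
    rw [hgw] at this; simp only [hg] at this; linarith

private lemma taylor_quad_lower {f f' f'' : ℝ → ℝ} {a b w C : ℝ}
    (haw : a ≤ w) (hwb : w ≤ b)
    (hf : ∀ u ∈ Icc a b, HasDerivAt f (f' u) u)
    (hf' : ∀ u ∈ Icc a b, HasDerivAt f' (f'' u) u)
    (hC : ∀ u ∈ Icc a b, -C ≤ f'' u) :
    ∀ u ∈ Icc a b, f w + f' w * (u - w) - C * (u - w) ^ 2 / 2 ≤ f u := by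
  intro u hu
  have := taylor_quad_upper (f := fun u => -f u) (f' := fun u => -f' u)
    (f'' := fun u => -f'' u) (c := -C) haw hwb
    (fun u hu => (hf u hu).neg) (fun u hu => (hf' u hu).neg)
    (fun u hu => by have := hC u hu; simp only [neg_neg]; linarith) u hu
  linarith
private lemma gauss_lin_eq {c : ℝ} (hc : 0 < c) (w x : ℝ) :
    exp ((x - w) - c * (x - w) ^ 2 / 2)
      = exp (1 / (2 * c)) * exp (-(c / 2) * (x - (w + 1 / c)) ^ 2) := by
  rw [← Real.exp_add]
  congr 1
  field_simp
  ring

private lemma integrable_gauss_lin {c : ℝ} (hc : 0 < c) (w : ℝ) :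
    Integrable (fun x : ℝ => exp ((x - w) - c * (x - w) ^ 2 / 2)) := by
  have h : (fun x : ℝ => exp ((x - w) - c * (x - w) ^ 2 / 2))
      = fun x => exp (1 / (2 * c)) * exp (-(c / 2) * (x - (w + 1 / c)) ^ 2) :=
    funext (gauss_lin_eq hc w)
  rw [h]
  exact ((integrable_exp_neg_mul_sq (by positivity : (0:ℝ) < c / 2)).comp_sub_right
    (w + 1 / c)).const_mul _

private lemma integral_gauss_lin {c : ℝ} (hc : 0 < c) (w : ℝ) :
    ∫ x : ℝ, exp ((x - w) - c * (x - w) ^ 2 / 2)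
      = Real.sqrt (2 * π / c) * exp (1 / (2 * c)) := by
  simp only [gauss_lin_eq hc w]
  rw [integral_const_mul, integral_sub_right_eq_self
    (fun x : ℝ => exp (-(c / 2) * x ^ 2)) (w + 1 / c), integral_gaussian]
  rw [mul_comm]
  congr 2
  rw [div_div_eq_mul_div, mul_comm]

private lemma integral_exp_tail {l : ℝ} (q : ℝ) (hl : 0 < l) :
    ∫ u in Ioi q, exp (-l * (u - q)) = 1 / l := by
  have hint : IntegrableOn (fun u : ℝ => exp (-l * (u - q))) (Ioi q) := by
    have h1 : IntegrableOn (fun u : ℝ => exp (-l * u)) (Ioi q) :=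
      exp_neg_integrableOn_Ioi q hl
    have := h1.const_mul (exp (l * q))
    refine this.congr (Filter.Eventually.of_forall fun u => ?_)
    show rexp (l * q) * rexp (-l * u) = rexp (-l * (u - q))
    rw [← Real.exp_add]
    congr 1
    ring
  have hderiv : ∀ u ∈ Ioi q, HasDerivAt (fun u : ℝ => -exp (-l * (u - q)) / l)
      (exp (-l * (u - q))) u := by
    intro u _
    have h1 : HasDerivAt (fun u : ℝ => -l * (u - q)) (-l) u := by
      simpa using ((hasDerivAt_id u).sub_const q).const_mul (-l)
    have h2 := (h1.exp.neg).div_const l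
    exact h2.congr_deriv (by field_simp)
  have htend : Tendsto (fun u : ℝ => -exp (-l * (u - q)) / l) atTop (𝓝 0) := by
    have h1 : Tendsto (fun u : ℝ => -l * (u - q)) atTop atBot := by
      apply Tendsto.const_mul_atTop_of_neg (by linarith : -l < 0)
      exact tendsto_atTop_add_const_right _ (-q) tendsto_id
    have h2 := (Real.tendsto_exp_atBot.comp h1).neg.div_const l
    simpa using h2
  have key := integral_Ioi_of_hasDerivAt_of_tendsto
    (((Real.continuous_exp.comp (by fun_prop : Continuous fun u : ℝ => -l * (u - q))).neg.div_const
      l).continuousWithinAt) hderiv hint htend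
  rw [key]
  field_simp
  simp

private lemma integrableOn_exp_tail (q : ℝ) {l : ℝ} (hl : 0 < l) :
    IntegrableOn (fun u : ℝ => exp (-l * (u - q))) (Ioi q) := by
  have h1 : IntegrableOn (fun u : ℝ => exp (-l * u)) (Ioi q) :=
    exp_neg_integrableOn_Ioi q hl
  have := h1.const_mul (exp (l * q))
  refine this.congr (Filter.Eventually.of_forall fun u => ?_)
  show rexp (l * q) * rexp (-l * u) = rexp (-l * (u - q))
  rw [← Real.exp_add]; congr 1; ring

noncomputable def phiF (t u : ℝ) : ℝ := t * Real.log u + u - Real.exp u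
noncomputable def phiD (t u : ℝ) : ℝ := t / u + 1 - Real.exp u
noncomputable def GlinF (c : ℝ) : ℝ := Real.sqrt (2 * π / c) * Real.exp (1 / (2 * c))
noncomputable def mloF (w : ℝ) : ℝ := w * Real.exp w / (w + 1 / w ^ 2) ^ 2 + Real.exp (w - 1 / w ^ 2)
noncomputable def MhiF (w : ℝ) : ℝ := w * Real.exp w / (w - 1 / w ^ 2) ^ 2 + Real.exp (w + 1 / w ^ 2)

section core
variable {t w : ℝ}

private lemma hasDerivAt_phiF (ht : (0:ℝ) ≤ t) {u : ℝ} (hu : 0 < u) :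
    HasDerivAt (phiF t) (phiD t u) u := by
  have h1 : HasDerivAt (fun u : ℝ => t * Real.log u + u - Real.exp u)
      (t * u⁻¹ + 1 - Real.exp u) u :=
    (((Real.hasDerivAt_log (ne_of_gt hu)).const_mul t).add (hasDerivAt_id u)).sub
      (Real.hasDerivAt_exp u)
  unfold phiF phiD
  rw [div_eq_mul_inv]
  exact h1

private lemma hasDerivAt_phiD (ht : (0:ℝ) ≤ t) {u : ℝ} (hu : 0 < u) :
    HasDerivAt (phiD t) (-(t / u ^ 2 + Real.exp u)) u := by
  have h1 : HasDerivAt (fun u : ℝ => t / u + 1 - Real.exp u)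
      (-(t / u ^ 2) + 0 - Real.exp u) u := by
    refine (HasDerivAt.add ?_ (hasDerivAt_const u 1)).sub (Real.hasDerivAt_exp u)
    have := (hasDerivAt_inv (ne_of_gt hu)).const_mul t
    simp only [← div_eq_mul_inv] at this
    exact this.congr_deriv (by field_simp)
  exact h1.congr_deriv (by ring)
end core

private lemma measurable_E (t : ℝ) : Measurable (fun u => Real.exp (phiF t u)) := by
  unfold phiF
  exact Real.measurable_exp.comp
    (((Real.measurable_log.const_mul t).add measurable_id).sub Real.measurable_exp)

private lemma core {t w : ℝ} (hw3 : 3 ≤ w) (hwt : w * Real.exp w = t)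
    (hm2 : 2 ≤ mloF w * (1 / w ^ 2)) :
    Real.exp (phiF t w) * (GlinF (MhiF w)
        - Real.exp (-(MhiF w * (1 / w ^ 2) ^ 2) / 4) * GlinF (MhiF w / 2))
      ≤ (∫ u in Ioi (0:ℝ), Real.exp (phiF t u)) ∧
    (∫ u in Ioi (0:ℝ), Real.exp (phiF t u))
      ≤ Real.exp (phiF t w) * (GlinF (mloF w)
        + w * Real.exp (-(1 / w ^ 2) - mloF w * (1 / w ^ 2) ^ 2 / 2)
        + Real.exp ((1 / w ^ 2) - mloF w * (1 / w ^ 2) ^ 2 / 2) / (mloF w * (1 / w ^ 2) - 1)) := by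
  set δ : ℝ := 1 / w ^ 2 with hδdef
  set p : ℝ := w - δ with hpdef
  set q : ℝ := w + δ with hqdef
  set m : ℝ := mloF w with hmdef
  set M : ℝ := MhiF w with hMdef
  have hw0 : (0:ℝ) < w := by linarith
  have hw2 : (9:ℝ) ≤ w ^ 2 := by nlinarith
  have hδpos : 0 < δ := by
    rw [hδdef]; exact div_pos one_pos (pow_pos hw0 2)
  have hδle : δ ≤ 1 / 9 := by
    rw [hδdef]; exact one_div_le_one_div_of_le (by norm_num) hw2
  have hp2 : (2:ℝ) ≤ p := by rw [hpdef]; linarith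
  have hp0 : (0:ℝ) < p := by linarith
  have hpw : p ≤ w := by rw [hpdef]; linarith
  have hwq : w ≤ q := by rw [hqdef]; linarith
  have hpq : p ≤ q := le_trans hpw hwq
  have hq0 : (0:ℝ) < q := lt_of_lt_of_le hp0 hpq
  have ht0 : (0:ℝ) < t := by rw [← hwt]; exact mul_pos hw0 (Real.exp_pos w)
  have hmeq : m = t / q ^ 2 + Real.exp p := by
    rw [hmdef, hqdef, hpdef, hδdef, ← hwt]; rfl
  have hMeq : M = t / p ^ 2 + Real.exp q := by
    rw [hMdef, hqdef, hpdef, hδdef, ← hwt]; rfl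
  have hm0 : (0:ℝ) < m := by
    rw [hmeq]
    have := Real.exp_pos p
    have : (0:ℝ) ≤ t / q ^ 2 := le_of_lt (div_pos ht0 (by positivity))
    linarith [Real.exp_pos p]
  have hM0 : (0:ℝ) < M := by
    rw [hMeq]
    have : (0:ℝ) ≤ t / p ^ 2 := le_of_lt (div_pos ht0 (by positivity))
    linarith [Real.exp_pos q]
  -- sandwich of the second derivative
  have hsand : ∀ u ∈ Icc p q, m ≤ t / u ^ 2 + Real.exp u ∧ t / u ^ 2 + Real.exp u ≤ M := by
    intro u hu
    have hu0 : 0 < u := lt_of_lt_of_le hp0 hu.1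
    constructor
    · rw [hmeq]
      refine add_le_add ?_ (Real.exp_le_exp.2 hu.1)
      have hu2 : u ^ 2 ≤ q ^ 2 := by nlinarith [hu.2]
      exact div_le_div_of_nonneg_left ht0.le (pow_pos hu0 2) hu2
    · rw [hMeq]
      refine add_le_add ?_ (Real.exp_le_exp.2 hu.2)
      have hu2 : p ^ 2 ≤ u ^ 2 := by nlinarith [hu.1]
      exact div_le_div_of_nonneg_left ht0.le (pow_pos hp0 2) hu2
  have hderiv1 : ∀ u ∈ Icc p q, HasDerivAt (phiF t) (phiD t u) u :=
    fun u hu => hasDerivAt_phiF ht0.le (lt_of_lt_of_le hp0 hu.1)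
  have hderiv2 : ∀ u ∈ Icc p q,
      HasDerivAt (phiD t) ((fun u => -(t / u ^ 2 + Real.exp u)) u) u :=
    fun u hu => hasDerivAt_phiD ht0.le (lt_of_lt_of_le hp0 hu.1)
  have hφdw : phiD t w = 1 := by
    unfold phiD
    rw [← hwt]
    field_simp
    ring
  have hquadU : ∀ u ∈ Icc p q,
      phiF t u ≤ phiF t w + (u - w) - m * (u - w) ^ 2 / 2 := by
    intro u hu
    have := taylor_quad_upper hpw hwq hderiv1 hderiv2
      (fun u hu => by show -(t / u ^ 2 + Real.exp u) ≤ -m; linarith [(hsand u hu).1]) u hu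
    rw [hφdw] at this
    linarith
  have hquadL : ∀ u ∈ Icc p q,
      phiF t w + (u - w) - M * (u - w) ^ 2 / 2 ≤ phiF t u := by
    intro u hu
    have := taylor_quad_lower hpw hwq hderiv1 hderiv2
      (fun u hu => by show -M ≤ _; linarith [(hsand u hu).2]) u hu
    rw [hφdw] at this
    linarith
  have hanti : AntitoneOn (phiD t) (Ioi 0) := by
    refine antiOn_of_hasDerivAt (convex_Ioi 0)
      (fun u hu => hasDerivAt_phiD ht0.le hu) (fun u hu => ?_)
    have h1 : 0 < t / u ^ 2 := div_pos ht0 (pow_pos (mem_Ioi.1 hu) 2)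
    have h2 := Real.exp_pos u
    show -(t / u ^ 2 + Real.exp u) ≤ 0
    linarith
  have hmonoL : MonotoneOn (phiF t) (Ioc 0 p) := by
    refine monoOn_of_hasDerivAt (convex_Ioc 0 p)
      (fun u hu => hasDerivAt_phiF ht0.le hu.1) (fun u hu => ?_)
    have := hanti hu.1 (mem_Ioi.2 hw0) (hu.2.trans hpw)
    rw [hφdw] at this
    linarith
  have hφdq : phiD t q ≤ 1 - m * δ := by
    have hder : ∀ u ∈ Icc w q, HasDerivAt (fun u => phiD t u + m * u)
        ((fun u => -(t / u ^ 2 + Real.exp u) + m) u) u := by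
      intro u hu
      have h1 := hasDerivAt_phiD ht0.le (lt_of_lt_of_le hw0 hu.1)
      have h2 : HasDerivAt (fun u : ℝ => m * u) m u := by
        simpa using (hasDerivAt_id u).const_mul m
      exact h1.add h2
    have hanti2 : AntitoneOn (fun u => phiD t u + m * u) (Icc w q) := by
      refine antiOn_of_hasDerivAt (convex_Icc w q) hder (fun u hu => ?_)
      have hmem : u ∈ Icc p q := ⟨hpw.trans hu.1, hu.2⟩
      show -(t / u ^ 2 + Real.exp u) + m ≤ 0
      linarith [(hsand u hmem).1]
    have h5 : phiD t q + m * q ≤ phiD t w + m * w :=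
      hanti2 (left_mem_Icc.2 hwq) (right_mem_Icc.2 hwq) hwq
    rw [hφdw] at h5
    have hq : q = w + δ := hqdef
    nlinarith [h5]
  have htangent : ∀ u ∈ Ici q, phiF t u ≤ phiF t q + phiD t q * (u - q) := by
    have hg : MonotoneOn (fun u => phiF t q + phiD t q * (u - q) - phiF t u) (Ici q) := by
      refine monoOn_of_hasDerivAt (convex_Ici q)
        (f' := fun u => phiD t q - phiD t u) (fun u hu => ?_) (fun u hu => ?_)
      · have h1 : HasDerivAt (fun u : ℝ => phiF t q + phiD t q * (u - q)) (phiD t q) u := by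
          exact ((hasDerivAt_const u (phiF t q)).add
            (((hasDerivAt_id u).sub_const q).const_mul (phiD t q))).congr_deriv (by simp)
        exact h1.sub (hasDerivAt_phiF ht0.le (lt_of_lt_of_le hq0 hu))
      · have := hanti (mem_Ioi.2 hq0) (mem_Ioi.2 (lt_of_lt_of_le hq0 hu)) hu
        linarith
    intro u hu
    have h2 := hg (self_mem_Ici) hu hu
    simp only [sub_self, mul_zero, add_zero] at h2
    linarith
  have hφp : phiF t p ≤ phiF t w - δ - m * δ ^ 2 / 2 := by
    have := hquadU p ⟨le_refl p, hpq⟩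
    have hp : p - w = -δ := by rw [hpdef]; ring
    rw [hp] at this
    nlinarith
  have hφq : phiF t q ≤ phiF t w + δ - m * δ ^ 2 / 2 := by
    have := hquadU q ⟨hpq, le_refl q⟩
    have hq : q - w = δ := by rw [hqdef]; ring
    rw [hq] at this
    linarith
  -- integrability
  have hInt2 : IntegrableOn (fun u => Real.exp (phiF t u)) (Icc p q) := by
    apply ContinuousOn.integrableOn_compact isCompact_Icc
    intro u hu
    have hu0 : 0 < u := lt_of_lt_of_le hp0 hu.1
    apply ContinuousAt.continuousWithinAt
    have hφ : ContinuousAt (phiF t) u := by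
      unfold phiF
      exact ((continuousAt_const.mul (Real.continuousAt_log hu0.ne')).add
        continuousAt_id).sub Real.continuous_exp.continuousAt
    exact Real.continuous_exp.continuousAt.comp hφ
  have hφdqneg : phiD t q ≤ -1 := by linarith
  have hl0 : (0:ℝ) < -(phiD t q) := by linarith
  have hltail : IntegrableOn (fun u : ℝ => Real.exp (phiD t q * (u - q))) (Ioi q) := by
    have := integrableOn_exp_tail q hl0
    simpa [neg_neg] using this
  have hInt3 : IntegrableOn (fun u => Real.exp (phiF t u)) (Ioi q) := by
    apply Integrable.mono' (hltail.const_mul (Real.exp (phiF t q)))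
    · exact ((measurable_E t).aestronglyMeasurable).restrict
    · rw [ae_restrict_iff' measurableSet_Ioi]
      refine Eventually.of_forall (fun u hu => ?_)
      rw [Real.norm_eq_abs, abs_of_nonneg (Real.exp_nonneg _), ← Real.exp_add]
      exact Real.exp_le_exp.2 (htangent u (mem_Ici.2 (le_of_lt hu)))
  have hInt1 : IntegrableOn (fun u => Real.exp (phiF t u)) (Ioo 0 p) := by
    have hconst : IntegrableOn (fun _ : ℝ => Real.exp (phiF t p)) (Ioo 0 p) :=
      integrableOn_const measure_Ioo_lt_top.ne
    apply Integrable.mono' hconst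
    · exact ((measurable_E t).aestronglyMeasurable).restrict
    · rw [ae_restrict_iff' measurableSet_Ioo]
      refine Eventually.of_forall (fun u hu => ?_)
      rw [Real.norm_eq_abs, abs_of_nonneg (Real.exp_nonneg _)]
      exact Real.exp_le_exp.2 (hmonoL ⟨hu.1, hu.2.le⟩ ⟨hp0, le_refl p⟩ hu.2.le)
  -- gaussian comparison integrands
  have hgM : Integrable (fun u : ℝ => Real.exp ((u - w) - M * (u - w) ^ 2 / 2)) :=
    integrable_gauss_lin hM0 w
  have hMhalf : (0:ℝ) < M / 2 := by linarith
  have hgM2 : Integrable (fun u : ℝ => Real.exp ((u - w) - M / 2 * (u - w) ^ 2 / 2)) :=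
    integrable_gauss_lin hMhalf w
  have hgm : Integrable (fun u : ℝ => Real.exp ((u - w) - m * (u - w) ^ 2 / 2)) :=
    integrable_gauss_lin hm0 w
  have hGM : (∫ u : ℝ, Real.exp ((u - w) - M * (u - w) ^ 2 / 2)) = GlinF M := by
    rw [integral_gauss_lin hM0 w]; rfl
  have hGM2 : (∫ u : ℝ, Real.exp ((u - w) - M / 2 * (u - w) ^ 2 / 2)) = GlinF (M / 2) := by
    rw [integral_gauss_lin hMhalf w]; rfl
  have hGm : (∫ u : ℝ, Real.exp ((u - w) - m * (u - w) ^ 2 / 2)) = GlinF m := by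
    rw [integral_gauss_lin hm0 w]; rfl
  -- splitting
  have hdisj2 : Disjoint (Ioo (0:ℝ) p) (Icc p q) := by
    rw [Set.disjoint_left]
    rintro x ⟨_, h1⟩ ⟨h2, _⟩
    exact absurd h2 (not_le.2 h1)
  have hIoc : IntegrableOn (fun u => Real.exp (phiF t u)) (Ioc 0 q) := by
    rw [← Ioo_union_Icc_eq_Ioc hp0 hpq]
    exact hInt1.union hInt2
  have hsplit : (∫ u in Ioi (0:ℝ), Real.exp (phiF t u))
      = ((∫ u in Ioo (0:ℝ) p, Real.exp (phiF t u))
        + (∫ u in Icc p q, Real.exp (phiF t u)))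
        + (∫ u in Ioi q, Real.exp (phiF t u)) := by
    rw [← Ioc_union_Ioi_eq_Ioi hq0.le,
      setIntegral_union (Ioc_disjoint_Ioi le_rfl) measurableSet_Ioi hIoc hInt3,
      ← Ioo_union_Icc_eq_Ioc hp0 hpq,
      setIntegral_union hdisj2 measurableSet_Icc hInt1 hInt2]
  have hnn1 : 0 ≤ ∫ u in Ioo (0:ℝ) p, Real.exp (phiF t u) :=
    setIntegral_nonneg measurableSet_Ioo (fun _ _ => Real.exp_nonneg _)
  have hnn3 : 0 ≤ ∫ u in Ioi q, Real.exp (phiF t u) :=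
    setIntegral_nonneg measurableSet_Ioi (fun _ _ => Real.exp_nonneg _)
  -- LOWER BOUND
  have hcomplL : (∫ u in (Icc p q)ᶜ, Real.exp ((u - w) - M * (u - w) ^ 2 / 2))
      ≤ Real.exp (-(M * δ ^ 2) / 4) * GlinF (M / 2) := by
    have hpt : ∀ u ∈ (Icc p q)ᶜ, Real.exp ((u - w) - M * (u - w) ^ 2 / 2)
        ≤ Real.exp (-(M * δ ^ 2) / 4) * Real.exp ((u - w) - M / 2 * (u - w) ^ 2 / 2) := by
      intro u hu
      simp only [mem_compl_iff, mem_Icc, not_and_or, not_le] at hu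
      have hsq : δ ^ 2 ≤ (u - w) ^ 2 := by
        rcases hu with h | h
        · nlinarith
        · nlinarith
      rw [← Real.exp_add]
      apply Real.exp_le_exp.2
      nlinarith [mul_le_mul_of_nonneg_left hsq hM0.le]
    calc (∫ u in (Icc p q)ᶜ, Real.exp ((u - w) - M * (u - w) ^ 2 / 2))
        ≤ ∫ u in (Icc p q)ᶜ,
            Real.exp (-(M * δ ^ 2) / 4) * Real.exp ((u - w) - M / 2 * (u - w) ^ 2 / 2) :=
          setIntegral_mono_on hgM.restrict ((hgM2.const_mul _).restrict)
            measurableSet_Icc.compl hpt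
      _ = Real.exp (-(M * δ ^ 2) / 4)
            * ∫ u in (Icc p q)ᶜ, Real.exp ((u - w) - M / 2 * (u - w) ^ 2 / 2) :=
          integral_const_mul _ _
      _ ≤ Real.exp (-(M * δ ^ 2) / 4)
            * ∫ u : ℝ, Real.exp ((u - w) - M / 2 * (u - w) ^ 2 / 2) := by
          apply mul_le_mul_of_nonneg_left _ (Real.exp_nonneg _)
          exact setIntegral_le_integral hgM2
            (Eventually.of_forall (fun u => Real.exp_nonneg _))
      _ = Real.exp (-(M * δ ^ 2) / 4) * GlinF (M / 2) := by rw [hGM2]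
  have hIccL : Real.exp (phiF t w)
        * (GlinF M - Real.exp (-(M * δ ^ 2) / 4) * GlinF (M / 2))
      ≤ ∫ u in Icc p q, Real.exp (phiF t u) := by
    have h1 : (∫ u in Icc p q, Real.exp ((u - w) - M * (u - w) ^ 2 / 2))
        = (∫ u : ℝ, Real.exp ((u - w) - M * (u - w) ^ 2 / 2))
          - ∫ u in (Icc p q)ᶜ, Real.exp ((u - w) - M * (u - w) ^ 2 / 2) := by
      rw [← integral_add_compl measurableSet_Icc hgM]
      ring
    have h2 : GlinF M - Real.exp (-(M * δ ^ 2) / 4) * GlinF (M / 2)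
        ≤ ∫ u in Icc p q, Real.exp ((u - w) - M * (u - w) ^ 2 / 2) := by
      rw [h1, hGM]
      linarith
    calc Real.exp (phiF t w) * (GlinF M - Real.exp (-(M * δ ^ 2) / 4) * GlinF (M / 2))
        ≤ Real.exp (phiF t w) * ∫ u in Icc p q, Real.exp ((u - w) - M * (u - w) ^ 2 / 2) :=
          mul_le_mul_of_nonneg_left h2 (Real.exp_nonneg _)
      _ = ∫ u in Icc p q, Real.exp (phiF t w) * Real.exp ((u - w) - M * (u - w) ^ 2 / 2) :=
          (integral_const_mul _ _).symm
      _ ≤ ∫ u in Icc p q, Real.exp (phiF t u) := by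
          refine setIntegral_mono_on ((hgM.const_mul _).restrict) hInt2
            measurableSet_Icc (fun u hu => ?_)
          rw [← Real.exp_add]
          exact Real.exp_le_exp.2 (by linarith [hquadL u hu])
  -- UPPER BOUND pieces
  have hupIoo : (∫ u in Ioo (0:ℝ) p, Real.exp (phiF t u))
      ≤ Real.exp (phiF t w) * (w * Real.exp (-δ - m * δ ^ 2 / 2)) := by
    have h1 : (∫ u in Ioo (0:ℝ) p, Real.exp (phiF t u))
        ≤ ∫ _u in Ioo (0:ℝ) p, Real.exp (phiF t p) := by
      refine setIntegral_mono_on hInt1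
        (integrableOn_const measure_Ioo_lt_top.ne) measurableSet_Ioo
        (fun u hu => ?_)
      exact Real.exp_le_exp.2 (hmonoL ⟨hu.1, hu.2.le⟩ ⟨hp0, le_refl p⟩ hu.2.le)
    have h2 : (∫ _u in Ioo (0:ℝ) p, Real.exp (phiF t p)) = p * Real.exp (phiF t p) := by
      rw [setIntegral_const, smul_eq_mul, measureReal_def, Real.volume_Ioo,
        ENNReal.toReal_ofReal (by linarith : (0:ℝ) ≤ p - 0)]
      ring
    have h3 : p * Real.exp (phiF t p) ≤ w * Real.exp (phiF t p) :=
      mul_le_mul_of_nonneg_right hpw (Real.exp_nonneg _)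
    have h4 : Real.exp (phiF t p) ≤ Real.exp (phiF t w) * Real.exp (-δ - m * δ ^ 2 / 2) := by
      rw [← Real.exp_add]
      exact Real.exp_le_exp.2 (by linarith)
    calc (∫ u in Ioo (0:ℝ) p, Real.exp (phiF t u)) ≤ p * Real.exp (phiF t p) := by
          rw [← h2]; exact h1
      _ ≤ w * Real.exp (phiF t p) := h3
      _ ≤ w * (Real.exp (phiF t w) * Real.exp (-δ - m * δ ^ 2 / 2)) :=
          mul_le_mul_of_nonneg_left h4 (by linarith)
      _ = Real.exp (phiF t w) * (w * Real.exp (-δ - m * δ ^ 2 / 2)) := by ring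
  have hupIcc : (∫ u in Icc p q, Real.exp (phiF t u))
      ≤ Real.exp (phiF t w) * GlinF m := by
    calc (∫ u in Icc p q, Real.exp (phiF t u))
        ≤ ∫ u in Icc p q, Real.exp (phiF t w) * Real.exp ((u - w) - m * (u - w) ^ 2 / 2) := by
          refine setIntegral_mono_on hInt2 ((hgm.const_mul _).restrict)
            measurableSet_Icc (fun u hu => ?_)
          rw [← Real.exp_add]
          exact Real.exp_le_exp.2 (by linarith [hquadU u hu])
      _ = Real.exp (phiF t w) * ∫ u in Icc p q, Real.exp ((u - w) - m * (u - w) ^ 2 / 2) :=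
          integral_const_mul _ _
      _ ≤ Real.exp (phiF t w) * ∫ u : ℝ, Real.exp ((u - w) - m * (u - w) ^ 2 / 2) := by
          apply mul_le_mul_of_nonneg_left _ (Real.exp_nonneg _)
          exact setIntegral_le_integral hgm (Eventually.of_forall (fun u => Real.exp_nonneg _))
      _ = Real.exp (phiF t w) * GlinF m := by rw [hGm]
  have hExpTail : (∫ u in Ioi q, Real.exp (phiD t q * (u - q))) = 1 / (-(phiD t q)) := by
    have := integral_exp_tail q hl0
    simpa [neg_neg] using this
  have hupTail : (∫ u in Ioi q, Real.exp (phiF t u))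
      ≤ Real.exp (phiF t w) * (Real.exp (δ - m * δ ^ 2 / 2) / (m * δ - 1)) := by
    have h1 : (∫ u in Ioi q, Real.exp (phiF t u))
        ≤ ∫ u in Ioi q, Real.exp (phiF t q) * Real.exp (phiD t q * (u - q)) := by
      refine setIntegral_mono_on hInt3 ((hltail.const_mul _)) measurableSet_Ioi
        (fun u hu => ?_)
      rw [← Real.exp_add]
      exact Real.exp_le_exp.2 (htangent u (mem_Ici.2 (le_of_lt hu)))
    have h2 : (∫ u in Ioi q, Real.exp (phiF t q) * Real.exp (phiD t q * (u - q)))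
        = Real.exp (phiF t q) * (1 / (-(phiD t q))) := by
      rw [integral_const_mul, hExpTail]
    have h3 : 1 / (-(phiD t q)) ≤ 1 / (m * δ - 1) := by
      apply one_div_le_one_div_of_le (by linarith) (by linarith)
    have h4 : Real.exp (phiF t q) ≤ Real.exp (phiF t w) * Real.exp (δ - m * δ ^ 2 / 2) := by
      rw [← Real.exp_add]
      exact Real.exp_le_exp.2 (by linarith)
    calc (∫ u in Ioi q, Real.exp (phiF t u))
        ≤ Real.exp (phiF t q) * (1 / (-(phiD t q))) := by rw [← h2]; exact h1
      _ ≤ (Real.exp (phiF t w) * Real.exp (δ - m * δ ^ 2 / 2)) * (1 / (m * δ - 1)) := by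
          apply mul_le_mul h4 h3 (by
            apply le_of_lt
            apply div_pos one_pos
            linarith) (by positivity)
      _ = Real.exp (phiF t w) * (Real.exp (δ - m * δ ^ 2 / 2) / (m * δ - 1)) := by ring
  constructor
  · calc Real.exp (phiF t w) * (GlinF M - Real.exp (-(M * δ ^ 2) / 4) * GlinF (M / 2))
        ≤ ∫ u in Icc p q, Real.exp (phiF t u) := hIccL
      _ ≤ ∫ u in Ioi (0:ℝ), Real.exp (phiF t u) := by rw [hsplit]; linarith
  · rw [hsplit]
    have hdist : Real.exp (phiF t w) * (GlinF m
          + w * Real.exp (-δ - m * δ ^ 2 / 2)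
          + Real.exp (δ - m * δ ^ 2 / 2) / (m * δ - 1))
        = Real.exp (phiF t w) * GlinF m
          + Real.exp (phiF t w) * (w * Real.exp (-δ - m * δ ^ 2 / 2))
          + Real.exp (phiF t w) * (Real.exp (δ - m * δ ^ 2 / 2) / (m * δ - 1)) := by ring
    linarith [hupIoo, hupIcc, hupTail, hdist]



private lemma subst_S (t : ℝ) :
    (∫ x in Ioi (0:ℝ), Real.log (1 + x) ^ t * Real.exp (-x))
      = Real.exp 1 * ∫ u in Ioi (0:ℝ), Real.exp (phiF t u) := by
  have hderiv : ∀ u ∈ Ioi (0:ℝ),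
      HasDerivWithinAt (fun u => Real.exp u - 1) (Real.exp u) (Ioi 0) u :=
    fun u _ => ((Real.hasDerivAt_exp u).sub_const 1).hasDerivWithinAt
  have hinj : InjOn (fun u => Real.exp u - 1) (Ioi 0) :=
    fun a _ b _ h => Real.exp_injective (by
      simp only at h
      linarith)
  have himg : (fun u => Real.exp u - 1) '' (Ioi 0) = Ioi (0:ℝ) := by
    ext x
    simp only [mem_image, mem_Ioi]
    constructor
    · rintro ⟨u, hu, rfl⟩
      have h2 : (1:ℝ) = Real.exp 0 := Real.exp_zero.symm
      have := Real.exp_lt_exp.2 hu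
      rw [← Real.exp_zero]
      linarith [Real.exp_zero, Real.exp_lt_exp.2 hu]
    · intro hx
      refine ⟨Real.log (1 + x), Real.log_pos (by linarith), ?_⟩
      rw [Real.exp_log (by linarith)]
      ring
  have hch := integral_image_eq_integral_abs_deriv_smul measurableSet_Ioi hderiv hinj
      (fun x => Real.log (1 + x) ^ t * Real.exp (-x))
  rw [himg] at hch
  rw [hch, ← integral_const_mul]
  refine setIntegral_congr_fun measurableSet_Ioi (fun u hu => ?_)
  have hu0 : (0:ℝ) < u := hu
  have h1 : 1 + (Real.exp u - 1) = Real.exp u := by ring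
  simp only [smul_eq_mul, abs_of_pos (Real.exp_pos u), h1, Real.log_exp]
  rw [Real.rpow_def_of_pos hu0]
  unfold phiF
  simp only [← Real.exp_add]
  congr 1
  ring




private lemma denom_eq {t w : ℝ} (hw0 : 0 < w) (hwt : w * Real.exp w = t) :
    Real.sqrt (2 * π * t) * w ^ (t - 1 / 2) * Real.exp (-t / w)
      = Real.sqrt (2 * π) * (Real.exp (phiF t w) * Real.exp (-(w / 2))) := by
  have hew : -t / w = -Real.exp w := by
    rw [← hwt]
    field_simp
  have hsq : Real.sqrt (2 * π * t) = Real.sqrt (2 * π) * (Real.exp (Real.log w / 2 + w / 2)) := by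
    rw [Real.sqrt_mul (by positivity) t, ← hwt, Real.sqrt_mul hw0.le, Real.exp_add]
    congr 2
    · conv_lhs => rw [← Real.exp_log hw0]
      rw [← Real.exp_half]
    · rw [← Real.exp_half]
  rw [hsq, hew, Real.rpow_def_of_pos hw0]
  unfold phiF
  simp only [mul_assoc, ← Real.exp_add]
  congr 1
  exact congrArg Real.exp (by ring)

private lemma ev_poly_le_exp' (c : ℝ) (n : ℕ) : ∀ᶠ w in atTop, c * w ^ n ≤ Real.exp w := by
  have h := tendsto_exp_div_pow_atTop n
  filter_upwards [h.eventually_ge_atTop c, eventually_gt_atTop (0:ℝ)] with w h1 h2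
  calc c * w ^ n ≤ Real.exp w / w ^ n * w ^ n := by
        apply mul_le_mul_of_nonneg_right h1 (by positivity)
    _ = Real.exp w := by field_simp

private lemma lim_delta' : Tendsto (fun w : ℝ => 1 / w ^ 2) atTop (𝓝 0) := by
  have h : Tendsto (fun w : ℝ => w ^ 2) atTop atTop :=
    tendsto_pow_atTop (by norm_num)
  exact h.inv_tendsto_atTop.congr (fun w => (one_div _).symm)

private lemma glin_lim' {F : ℝ → ℝ} {a : ℝ} (ha : 0 < a)
    (hF : Tendsto (fun w => F w / Real.exp w) atTop (𝓝 a))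
    (hFpos : ∀ᶠ w in atTop, 0 < F w) :
    Tendsto (fun w => GlinF (F w) * (Real.exp (w / 2) / Real.sqrt (2 * π))) atTop
      (𝓝 (Real.sqrt a⁻¹)) := by
  have hFtop : Tendsto F atTop atTop := by
    apply tendsto_atTop_mono' atTop (f₁ := fun w => a / 2 * Real.exp w)
    · filter_upwards [hF.eventually (eventually_ge_nhds (by linarith : a / 2 < a))] with w hw
      have := Real.exp_pos w
      calc a / 2 * Real.exp w ≤ F w / Real.exp w * Real.exp w := by
            apply mul_le_mul_of_nonneg_right hw (Real.exp_nonneg w)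
        _ = F w := by field_simp
    · exact (tendsto_exp_atTop.const_mul_atTop (by linarith))
  have h1 : Tendsto (fun w => Real.exp (1 / (2 * F w))) atTop (𝓝 1) := by
    have h2 : Tendsto (fun w => 1 / (2 * F w)) atTop (𝓝 0) := by
      exact ((hFtop.const_mul_atTop (by norm_num : (0:ℝ) < 2)).inv_tendsto_atTop).congr
        (fun w => (one_div _).symm)
    have := (Real.continuous_exp.tendsto 0).comp h2
    rw [Real.exp_zero] at this
    exact this
  have h3 : Tendsto (fun w => Real.exp w / F w) atTop (𝓝 a⁻¹) :=
    (hF.inv₀ (ne_of_gt ha)).congr (fun w => inv_div (F w) (Real.exp w))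
  have h4 : Tendsto (fun w => Real.sqrt (Real.exp w / F w)) atTop (𝓝 (Real.sqrt a⁻¹)) :=
    (Real.continuous_sqrt.tendsto _).comp h3
  have heq : ∀ᶠ w in atTop, Real.sqrt (Real.exp w / F w) * Real.exp (1 / (2 * F w))
      = GlinF (F w) * (Real.exp (w / 2) / Real.sqrt (2 * π)) := by
    filter_upwards [hFpos] with w hw
    have hs : Real.sqrt (2 * π / F w) * (Real.exp (w / 2) / Real.sqrt (2 * π))
        = Real.sqrt (Real.exp w / F w) := by
      rw [Real.exp_half, mul_div_assoc',
        ← Real.sqrt_mul (div_nonneg (by positivity) hw.le) (Real.exp w),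
        ← Real.sqrt_div (mul_nonneg (div_nonneg (by positivity) hw.le)
          (Real.exp_nonneg w)) (2 * π)]
      congr 1
      have hpi := Real.pi_pos
      field_simp
    unfold GlinF
    rw [← hs]
    ring
  have := (h4.mul h1)
  rw [mul_one] at this
  exact this.congr' heq




noncomputable def loF (w : ℝ) : ℝ :=
  (GlinF (MhiF w) - Real.exp (-(MhiF w * (1 / w ^ 2) ^ 2) / 4) * GlinF (MhiF w / 2))
    * (Real.exp (w / 2) / Real.sqrt (2 * π))
noncomputable def hiF (w : ℝ) : ℝ :=
  (GlinF (mloF w) + w * Real.exp (-(1 / w ^ 2) - mloF w * (1 / w ^ 2) ^ 2 / 2)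
      + Real.exp ((1 / w ^ 2) - mloF w * (1 / w ^ 2) ^ 2 / 2) / (mloF w * (1 / w ^ 2) - 1))
    * (Real.exp (w / 2) / Real.sqrt (2 * π))







private lemma Mhi_pos : ∀ᶠ w in atTop, 0 < MhiF w := by
  filter_upwards [eventually_ge_atTop (3:ℝ)] with w hw
  have hw0 : (0:ℝ) < w := by linarith
  have h1 : 0 ≤ w * Real.exp w / (w - 1 / w ^ 2) ^ 2 :=
    div_nonneg (mul_nonneg hw0.le (Real.exp_nonneg w)) (sq_nonneg _)
  unfold MhiF
  linarith [Real.exp_pos (w + 1 / w ^ 2)]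

private lemma mlo_pos : ∀ᶠ w in atTop, 0 < mloF w := by
  filter_upwards [eventually_ge_atTop (3:ℝ)] with w hw
  have hw0 : (0:ℝ) < w := by linarith
  have h1 : 0 ≤ w * Real.exp w / (w + 1 / w ^ 2) ^ 2 :=
    div_nonneg (mul_nonneg hw0.le (Real.exp_nonneg w)) (sq_nonneg _)
  unfold mloF
  linarith [Real.exp_pos (w - 1 / w ^ 2)]

private lemma lim_expdel : Tendsto (fun w : ℝ => Real.exp (1 / w ^ 2)) atTop (𝓝 1) := by
  have := (Real.continuous_exp.tendsto 0).comp lim_delta'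
  rw [Real.exp_zero] at this
  exact this

private lemma lim_Mdiv : Tendsto (fun w => MhiF w / Real.exp w) atTop (𝓝 1) := by
  have hA : Tendsto (fun w : ℝ => w / (w - 1 / w ^ 2) ^ 2) atTop (𝓝 0) := by
    apply squeeze_zero' (g := fun w : ℝ => 3 / w)
    · filter_upwards [eventually_ge_atTop (3:ℝ)] with w hw
      have hw0 : (0:ℝ) < w := by linarith
      positivity
    · filter_upwards [eventually_ge_atTop (3:ℝ)] with w hw
      have hw0 : (0:ℝ) < w := by linarith
      have hδ : 1 / w ^ 2 ≤ 1 := by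
        rw [div_le_one (by positivity)]; nlinarith
      have h2 : (2/3 : ℝ) * w ≤ w - 1 / w ^ 2 := by
        have : (1:ℝ) ≤ w / 3 := by linarith
        nlinarith
      have h3 : (4/9 : ℝ) * w ^ 2 ≤ (w - 1 / w ^ 2) ^ 2 := by nlinarith
      rw [div_le_div_iff₀ (by nlinarith) hw0]
      nlinarith
    · have h0 : Tendsto (fun x : ℝ => x⁻¹) atTop (𝓝 0) := tendsto_inv_atTop_zero
      have h4 := h0.const_mul (3:ℝ)
      simpa [div_eq_mul_inv] using h4
  have hB := lim_expdel
  have hsum := hA.add hB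
  rw [zero_add] at hsum
  apply hsum.congr'
  filter_upwards [eventually_ge_atTop (3:ℝ)] with w hw
  have hw0 : (0:ℝ) < w := by linarith
  have hne : w - 1 / w ^ 2 ≠ 0 := by
    have : 1 / w ^ 2 ≤ 1 := by rw [div_le_one (by positivity)]; nlinarith
    nlinarith
  unfold MhiF
  rw [Real.exp_add]
  field_simp

private lemma lim_mdiv : Tendsto (fun w => mloF w / Real.exp w) atTop (𝓝 1) := by
  have hA : Tendsto (fun w : ℝ => w / (w + 1 / w ^ 2) ^ 2) atTop (𝓝 0) := by
    apply squeeze_zero' (g := fun w : ℝ => 1 / w)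
    · filter_upwards [eventually_ge_atTop (3:ℝ)] with w hw
      have hw0 : (0:ℝ) < w := by linarith
      positivity
    · filter_upwards [eventually_ge_atTop (3:ℝ)] with w hw
      have hw0 : (0:ℝ) < w := by linarith
      have hδ : 0 < 1 / w ^ 2 := by positivity
      have h3 : w ^ 2 ≤ (w + 1 / w ^ 2) ^ 2 := by nlinarith
      rw [div_le_div_iff₀ (by nlinarith) hw0]
      nlinarith
    · have h0 : Tendsto (fun x : ℝ => x⁻¹) atTop (𝓝 0) := tendsto_inv_atTop_zero
      simpa [one_div] using h0
  have hB : Tendsto (fun w : ℝ => Real.exp (-(1 / w ^ 2))) atTop (𝓝 1) := by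
    have hn := lim_delta'.neg
    rw [neg_zero] at hn
    have := (Real.continuous_exp.tendsto 0).comp hn
    rw [Real.exp_zero] at this
    exact this
  have hsum := hA.add hB
  rw [zero_add] at hsum
  apply hsum.congr'
  filter_upwards [eventually_ge_atTop (3:ℝ)] with w hw
  have hw0 : (0:ℝ) < w := by linarith
  have hne : w + 1 / w ^ 2 ≠ 0 := by positivity
  unfold mloF
  rw [show w - 1 / w ^ 2 = w + -(1 / w ^ 2) by ring, Real.exp_add, Real.exp_neg]
  field_simp

private lemma ev_m2 : ∀ᶠ w in atTop, 2 ≤ mloF w * (1 / w ^ 2) := by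
  filter_upwards [ev_poly_le_exp' (2 * Real.exp 1) 2, eventually_ge_atTop (3:ℝ)] with w hpoly hw
  have hw0 : (0:ℝ) < w := by linarith
  have hδ1 : 1 / w ^ 2 ≤ 1 := by rw [div_le_one (by positivity)]; nlinarith
  have hm1 : 2 * w ^ 2 ≤ mloF w := by
    have h1 : Real.exp (w - 1) ≤ Real.exp (w - 1 / w ^ 2) := Real.exp_le_exp.2 (by linarith)
    have h2 : 2 * w ^ 2 ≤ Real.exp (w - 1) := by
      rw [Real.exp_sub]
      rw [le_div_iff₀ (Real.exp_pos 1)]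
      calc 2 * w ^ 2 * Real.exp 1 = 2 * Real.exp 1 * w ^ 2 := by ring
        _ ≤ Real.exp w := hpoly
    have h3 : 0 ≤ w * Real.exp w / (w + 1 / w ^ 2) ^ 2 :=
      div_nonneg (mul_nonneg hw0.le (Real.exp_nonneg w)) (sq_nonneg _)
    unfold mloF
    linarith
  have heq : 2 * w ^ 2 * (1 / w ^ 2) = 2 := by field_simp
  calc (2:ℝ) = 2 * w ^ 2 * (1 / w ^ 2) := heq.symm
    _ ≤ mloF w * (1 / w ^ 2) := mul_le_mul_of_nonneg_right hm1 (by positivity)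

private lemma ev_m4 : ∀ᶠ w in atTop, 2 * w ≤ mloF w * (1 / w ^ 2) ^ 2 / 2 := by
  filter_upwards [ev_poly_le_exp' (4 * Real.exp 1) 5, eventually_ge_atTop (3:ℝ)] with w hpoly hw
  have hw0 : (0:ℝ) < w := by linarith
  have hδ1 : 1 / w ^ 2 ≤ 1 := by rw [div_le_one (by positivity)]; nlinarith
  have hm1 : 4 * w ^ 5 ≤ mloF w := by
    have h1 : Real.exp (w - 1) ≤ Real.exp (w - 1 / w ^ 2) := Real.exp_le_exp.2 (by linarith)
    have h2 : 4 * w ^ 5 ≤ Real.exp (w - 1) := by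
      rw [Real.exp_sub, le_div_iff₀ (Real.exp_pos 1)]
      calc 4 * w ^ 5 * Real.exp 1 = 4 * Real.exp 1 * w ^ 5 := by ring
        _ ≤ Real.exp w := hpoly
    have h3 : 0 ≤ w * Real.exp w / (w + 1 / w ^ 2) ^ 2 :=
      div_nonneg (mul_nonneg hw0.le (Real.exp_nonneg w)) (sq_nonneg _)
    unfold mloF
    linarith
  have heq : 4 * w ^ 5 * (1 / w ^ 2) ^ 2 = 4 * w := by field_simp
  have := mul_le_mul_of_nonneg_right hm1 (by positivity : (0:ℝ) ≤ (1 / w ^ 2) ^ 2)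
  rw [heq] at this
  linarith

private lemma lim_exp_neghalf : Tendsto (fun w : ℝ => Real.exp (-(w / 2)) / Real.sqrt (2 * π))
    atTop (𝓝 0) := by
  have h1 : Tendsto (fun w : ℝ => w / 2) atTop atTop :=
    Tendsto.atTop_div_const (by norm_num) tendsto_id
  have h2 := tendsto_exp_neg_atTop_nhds_zero.comp h1
  have h3 := h2.div_const (Real.sqrt (2 * π))
  simpa using h3

private lemma lim_lo : Tendsto loF atTop (𝓝 1) := by
  have h1 := glin_lim' one_pos lim_Mdiv Mhi_pos
  rw [inv_one, Real.sqrt_one] at h1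
  have hhalf : Tendsto (fun w => (MhiF w / 2) / Real.exp w) atTop (𝓝 (1 / 2)) := by
    have := lim_Mdiv.div_const 2
    apply this.congr
    intro w
    rw [div_div, div_div, mul_comm]
  have h2 := glin_lim' (by norm_num : (0:ℝ) < 1 / 2)
    hhalf (Mhi_pos.mono fun w h => by linarith)
  have h3 : Tendsto (fun w => Real.exp (-(MhiF w * (1 / w ^ 2) ^ 2) / 4)) atTop (𝓝 0) := by
    have hXtop : Tendsto (fun w => MhiF w * (1 / w ^ 2) ^ 2 / 4) atTop atTop := by
      apply tendsto_atTop_mono' atTop (f₁ := fun w => Real.exp w / w ^ 4 / 8)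
      · filter_upwards [lim_Mdiv.eventually (eventually_ge_nhds
            (by norm_num : (1:ℝ)/2 < 1)), eventually_ge_atTop (3:ℝ)] with w hM hw
        have hw0 : (0:ℝ) < w := by linarith
        have hM2 : 1/2 * Real.exp w ≤ MhiF w := by
          have := (le_div_iff₀ (Real.exp_pos w)).1 hM
          linarith
        calc Real.exp w / w ^ 4 / 8 = (1/2 * Real.exp w) * (1 / w ^ 4) / 4 := by
              field_simp; ring
          _ ≤ MhiF w * (1 / w ^ 4) / 4 := by gcongr
          _ = MhiF w * (1 / w ^ 2) ^ 2 / 4 := by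
              rw [div_pow, one_pow, ← pow_mul]
      · exact (tendsto_exp_div_pow_atTop 4).atTop_div_const (by norm_num)
    have := Real.tendsto_exp_atBot.comp (tendsto_neg_atTop_atBot.comp hXtop)
    apply this.congr
    intro w
    show Real.exp (-(MhiF w * (1 / w ^ 2) ^ 2 / 4)) = _
    rw [neg_div]
  have hmain := h1.sub (h3.mul h2)
  rw [zero_mul, sub_zero] at hmain
  apply hmain.congr
  intro w
  unfold loF
  ring

private lemma lim_hi : Tendsto hiF atTop (𝓝 1) := by
  have h1 := glin_lim' one_pos lim_mdiv mlo_pos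
  rw [inv_one, Real.sqrt_one] at h1
  have hg0 : Tendsto (fun w : ℝ => w * Real.exp (-w) * (Real.exp (-(w / 2)) / Real.sqrt (2 * π)))
      atTop (𝓝 0) := by
    have ha : Tendsto (fun w : ℝ => w * Real.exp (-w)) atTop (𝓝 0) := by
      have := tendsto_pow_mul_exp_neg_atTop_nhds_zero 1
      simpa using this
    have := ha.mul lim_exp_neghalf
    simpa using this
  have hT1 : Tendsto (fun w => w * Real.exp (-(1 / w ^ 2) - mloF w * (1 / w ^ 2) ^ 2 / 2)
      * (Real.exp (w / 2) / Real.sqrt (2 * π))) atTop (𝓝 0) := by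
    apply squeeze_zero'
      (g := fun w : ℝ => w * Real.exp (-w) * (Real.exp (-(w / 2)) / Real.sqrt (2 * π)))
    · filter_upwards [eventually_ge_atTop (0:ℝ)] with w hw
      have := Real.sqrt_nonneg (2 * π)
      positivity
    · filter_upwards [ev_m4, eventually_ge_atTop (3:ℝ)] with w hq hw
      have hw0 : (0:ℝ) < w := by linarith
      have hδ0 : (0:ℝ) ≤ 1 / w ^ 2 := by positivity
      have hL : w * Real.exp (-(1 / w ^ 2) - mloF w * (1 / w ^ 2) ^ 2 / 2)
          * (Real.exp (w / 2) / Real.sqrt (2 * π))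
          = w / Real.sqrt (2 * π)
            * Real.exp ((-(1 / w ^ 2) - mloF w * (1 / w ^ 2) ^ 2 / 2) + w / 2) := by
        rw [Real.exp_add]; ring
      have hR : w * Real.exp (-w) * (Real.exp (-(w / 2)) / Real.sqrt (2 * π))
          = w / Real.sqrt (2 * π) * Real.exp (-w + -(w / 2)) := by
        rw [Real.exp_add]; ring
      rw [hL, hR]
      apply mul_le_mul_of_nonneg_left (Real.exp_le_exp.2 (by linarith))
      exact div_nonneg hw0.le (Real.sqrt_nonneg _)
    · exact hg0
  have hT2 : Tendsto (fun w => Real.exp ((1 / w ^ 2) - mloF w * (1 / w ^ 2) ^ 2 / 2)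
      / (mloF w * (1 / w ^ 2) - 1) * (Real.exp (w / 2) / Real.sqrt (2 * π))) atTop (𝓝 0) := by
    apply squeeze_zero'
      (g := fun w : ℝ => Real.exp 1 * (Real.exp (-w) * (Real.exp (-(w / 2)) / Real.sqrt (2 * π))))
    · filter_upwards [ev_m2] with w hm2
      have h1 : (0:ℝ) < mloF w * (1 / w ^ 2) - 1 := by linarith
      have := Real.sqrt_nonneg (2 * π)
      positivity
    · filter_upwards [ev_m2, ev_m4, eventually_ge_atTop (3:ℝ)] with w hm2 hq hw
      have hw0 : (0:ℝ) < w := by linarith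
      have hδ1 : 1 / w ^ 2 ≤ 1 := by rw [div_le_one (by positivity)]; nlinarith
      have h1 : Real.exp ((1 / w ^ 2) - mloF w * (1 / w ^ 2) ^ 2 / 2)
          / (mloF w * (1 / w ^ 2) - 1)
          ≤ Real.exp ((1 / w ^ 2) - mloF w * (1 / w ^ 2) ^ 2 / 2) :=
        div_le_self (Real.exp_nonneg _) (by linarith)
      have h2 : Real.exp ((1 / w ^ 2) - mloF w * (1 / w ^ 2) ^ 2 / 2)
          / (mloF w * (1 / w ^ 2) - 1) * (Real.exp (w / 2) / Real.sqrt (2 * π))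
          ≤ Real.exp ((1 / w ^ 2) - mloF w * (1 / w ^ 2) ^ 2 / 2)
            * (Real.exp (w / 2) / Real.sqrt (2 * π)) :=
        mul_le_mul_of_nonneg_right h1
          (div_nonneg (Real.exp_nonneg _) (Real.sqrt_nonneg _))
      have hL : Real.exp ((1 / w ^ 2) - mloF w * (1 / w ^ 2) ^ 2 / 2)
          * (Real.exp (w / 2) / Real.sqrt (2 * π))
          = 1 / Real.sqrt (2 * π)
            * Real.exp (((1 / w ^ 2) - mloF w * (1 / w ^ 2) ^ 2 / 2) + w / 2) := by
        rw [Real.exp_add]; ring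
      have hR : Real.exp 1 * (Real.exp (-w) * (Real.exp (-(w / 2)) / Real.sqrt (2 * π)))
          = 1 / Real.sqrt (2 * π) * Real.exp (1 + (-w + -(w / 2))) := by
        rw [Real.exp_add, Real.exp_add]; ring
      calc Real.exp ((1 / w ^ 2) - mloF w * (1 / w ^ 2) ^ 2 / 2)
            / (mloF w * (1 / w ^ 2) - 1) * (Real.exp (w / 2) / Real.sqrt (2 * π))
          ≤ Real.exp ((1 / w ^ 2) - mloF w * (1 / w ^ 2) ^ 2 / 2)
            * (Real.exp (w / 2) / Real.sqrt (2 * π)) := h2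
        _ = 1 / Real.sqrt (2 * π)
            * Real.exp (((1 / w ^ 2) - mloF w * (1 / w ^ 2) ^ 2 / 2) + w / 2) := hL
        _ ≤ 1 / Real.sqrt (2 * π) * Real.exp (1 + (-w + -(w / 2))) := by
            apply mul_le_mul_of_nonneg_left (Real.exp_le_exp.2 (by linarith))
            positivity
        _ = Real.exp 1 * (Real.exp (-w) * (Real.exp (-(w / 2)) / Real.sqrt (2 * π))) := hR.symm
    · have ha : Tendsto (fun w : ℝ => Real.exp (-w)) atTop (𝓝 0) :=
        tendsto_exp_neg_atTop_nhds_zero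
      have hb := ha.mul lim_exp_neghalf
      rw [mul_zero] at hb
      have hc := hb.const_mul (Real.exp 1)
      rw [mul_zero] at hc
      exact hc
  have hmain := (h1.add hT1).add hT2
  rw [add_zero, add_zero] at hmain
  apply hmain.congr
  intro w
  unfold hiF
  ring


private lemma rho_cancel (L φ w : ℝ) :
    (L * (Real.exp (w / 2) / Real.sqrt (2 * π)))
        * (Real.sqrt (2 * π) * (Real.exp φ * Real.exp (-(w / 2))))
      = Real.exp φ * L := by
  have hs : Real.sqrt (2 * π) ≠ 0 := ne_of_gt (Real.sqrt_pos.2 (by positivity))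
  have h7 : Real.exp (w / 2) * Real.exp (-(w / 2)) = 1 := by
    rw [← Real.exp_add]; norm_num
  calc (L * (Real.exp (w / 2) / Real.sqrt (2 * π)))
        * (Real.sqrt (2 * π) * (Real.exp φ * Real.exp (-(w / 2))))
      = (Real.exp (w / 2) * Real.exp (-(w / 2)))
        * (Real.sqrt (2 * π) / Real.sqrt (2 * π)) * (Real.exp φ * L) := by ring
    _ = Real.exp φ * L := by rw [h7, div_self hs]; ring

/-- **Asymptotics of `S(t) = ∫_0^∞ (ln(1+x))ᵗ e^{-x} dx`.** With `W` the Lambert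
W-function, `S(t) = e √(2πt) W(t)^{t-1/2} e^{-t/W(t)} (1 + o(1))` as `t → ∞`. -/
theorem laplace_asymptotics_of_S
    (W : ℝ → ℝ)
    (hW : ∀ t : ℝ, 0 ≤ t → 0 ≤ W t ∧ W t * Real.exp (W t) = t)
    (S : ℝ → ℝ)
    (hS : ∀ t : ℝ, 0 ≤ t →
      S t = ∫ x in Set.Ioi (0 : ℝ), (Real.log (1 + x)) ^ t * Real.exp (-x)) :
    Tendsto
      (fun t : ℝ =>
        S t / (Real.exp 1 * Real.sqrt (2 * Real.pi * t) * W t ^ (t - 1 / 2) *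
          Real.exp (-t / W t)))
      atTop (𝓝 1) := by
  have hWtop : Tendsto W atTop atTop := by
    rw [tendsto_atTop_atTop]
    intro b
    refine ⟨max 1 (b * Real.exp b), fun t ht => ?_⟩
    have ht1 : (1:ℝ) ≤ t := le_trans (le_max_left _ _) ht
    have ht0 : (0:ℝ) ≤ t := by linarith
    obtain ⟨hW0, hWe⟩ := hW t ht0
    by_contra hlt
    push_neg at hlt
    have hb0 : 0 < b := lt_of_le_of_lt hW0 hlt
    have h2 : t < b * Real.exp b := by
      calc t = W t * Real.exp (W t) := hWe.symm
        _ ≤ W t * Real.exp b :=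
            mul_le_mul_of_nonneg_left (Real.exp_le_exp.2 hlt.le) hW0
        _ < b * Real.exp b := mul_lt_mul_of_pos_right hlt (Real.exp_pos b)
    have h3 : b * Real.exp b ≤ t := le_trans (le_max_right _ _) ht
    linarith
  have hbound : ∀ᶠ t in atTop,
      loF (W t) ≤ S t / (Real.exp 1 * Real.sqrt (2 * Real.pi * t) * W t ^ (t - 1 / 2) *
          Real.exp (-t / W t))
      ∧ S t / (Real.exp 1 * Real.sqrt (2 * Real.pi * t) * W t ^ (t - 1 / 2) *
          Real.exp (-t / W t)) ≤ hiF (W t) := by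
    filter_upwards [hWtop.eventually (eventually_ge_atTop (3:ℝ)),
      hWtop.eventually ev_m2, eventually_ge_atTop (0:ℝ)] with t hw3 hm2 ht0
    obtain ⟨hW0, hWe⟩ := hW t ht0
    have hw0 : 0 < W t := by linarith
    have hI := core hw3 hWe hm2
    have hSt : S t = Real.exp 1 * ∫ u in Ioi (0:ℝ), Real.exp (phiF t u) := by
      rw [hS t ht0, subst_S]
    have hden := denom_eq hw0 hWe
    have hQ : S t / (Real.exp 1 * Real.sqrt (2 * Real.pi * t) * W t ^ (t - 1 / 2) *
          Real.exp (-t / W t))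
        = (∫ u in Ioi (0:ℝ), Real.exp (phiF t u))
          / (Real.sqrt (2 * π) * (Real.exp (phiF t (W t)) * Real.exp (-(W t / 2)))) := by
      rw [hSt, show Real.exp 1 * Real.sqrt (2 * Real.pi * t) * W t ^ (t - 1 / 2) *
          Real.exp (-t / W t) = Real.exp 1 * (Real.sqrt (2 * Real.pi * t) * W t ^ (t - 1 / 2) *
          Real.exp (-t / W t)) by ring, hden,
        mul_div_mul_left _ _ (Real.exp_ne_zero 1)]
    have hX0 : 0 < Real.sqrt (2 * π) * (Real.exp (phiF t (W t)) * Real.exp (-(W t / 2))) := by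
      have h1 : 0 < Real.sqrt (2 * π) := Real.sqrt_pos.2 (by positivity)
      positivity
    constructor
    · rw [hQ, le_div_iff₀ hX0]
      calc loF (W t) * (Real.sqrt (2 * π) * (Real.exp (phiF t (W t)) * Real.exp (-(W t / 2))))
          = Real.exp (phiF t (W t)) * (GlinF (MhiF (W t))
              - Real.exp (-(MhiF (W t) * (1 / (W t) ^ 2) ^ 2) / 4) * GlinF (MhiF (W t) / 2)) := by
            unfold loF
            exact rho_cancel _ _ _
        _ ≤ _ := hI.1
    · rw [hQ, div_le_iff₀ hX0]
      calc (∫ u in Ioi (0:ℝ), Real.exp (phiF t u))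
          ≤ Real.exp (phiF t (W t)) * (GlinF (mloF (W t))
              + W t * Real.exp (-(1 / (W t) ^ 2) - mloF (W t) * (1 / (W t) ^ 2) ^ 2 / 2)
              + Real.exp ((1 / (W t) ^ 2) - mloF (W t) * (1 / (W t) ^ 2) ^ 2 / 2)
                / (mloF (W t) * (1 / (W t) ^ 2) - 1)) := hI.2
        _ = hiF (W t)
            * (Real.sqrt (2 * π) * (Real.exp (phiF t (W t)) * Real.exp (-(W t / 2)))) := by
            unfold hiF
            exact (rho_cancel _ _ _).symm
  exact tendsto_of_tendsto_of_tendsto_of_le_of_le' (lim_lo.comp hWtop) (lim_hi.comp hWtop)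
    (hbound.mono fun t h => h.1) (hbound.mono fun t h => h.2)
end
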